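/- arXiv:1201.3500 — 3 statements merged into one kernel-verified Lean document; each statement's English description precedes it below -/
import Mathlib

section
/- The map θ : (ℝ^{N+1} × ℝ^{N+1}, d_{ℝ^{2(N+1)}}) → (S_0, d*) sending (y, z) to f = (f_1, f_2), as well as its inverse θ^{−1}, is continuous, where d_{ℝ^{2(N+1)}}((y, z), (ȳ, z̄)) = max_{0 ≤ i ≤ N} max(|y_i − ȳ_i|, |z_i − z̄_i|) and d*(f, g) = sup_{x ∈ I} max(|f_1(x) − g_1(x)|, |f_2(x) − g_2(x)|). Consequently, S_0 (with its members extended by zero outside I) is a closed and complete subspace of L²(ℝ, ℝ²), and S_0^1 is a closed subspace of L²(ℝ). -/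
open Set MeasureTheory

/-- The affine contractive homeomorphism `L n` mapping `I = [x 0, x N]` onto the
`n`-th subinterval. -/
noncomputable def LMap {N : ℕ} (x : Fin (N + 1) → ℝ) (n : Fin N) (u : ℝ) : ℝ :=
  ((x n.succ - x n.castSucc) / (x (Fin.last N) - x 0)) * u +
    (x (Fin.last N) * x n.castSucc - x 0 * x n.succ) / (x (Fin.last N) - x 0)

/-- `f` is a fixed point of the operator `Φ_t`:  for every `n` and `u ∈ I`,
`f (L_n u) = F_n (u, f u)` where `F_n (u, y, z) = (α_n y + β_n z + p_n u, γ_n z + q_n u)`,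
the linear polynomials being `p_n u = (t n).1.1 * u + (t n).1.2` and
`q_n u = (t n).2.1 * u + (t n).2.2`. -/
def FixEq {N : ℕ} (x : Fin (N + 1) → ℝ) (α β γ : Fin N → ℝ)
    (t : Fin N → (ℝ × ℝ) × (ℝ × ℝ)) (f : ℝ → ℝ × ℝ) : Prop :=
  ∀ n : Fin N, ∀ u ∈ Icc (x 0) (x (Fin.last N)),
    f (LMap x n u) =
      (α n * (f u).1 + β n * (f u).2 + ((t n).1.1 * u + (t n).1.2),
       γ n * (f u).2 + ((t n).2.1 * u + (t n).2.2))

/-- `f` belongs to `B(I, ℝ²)`, the set of bounded functions on `I = [x 0, x N]`. -/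
def BddOnI {N : ℕ} (x : Fin (N + 1) → ℝ) (f : ℝ → ℝ × ℝ) : Prop :=
  ∃ M : ℝ, ∀ u ∈ Icc (x 0) (x (Fin.last N)), ‖f u‖ ≤ M

/-- The space `S₀` of pairs `f = (f₁, f₂)` where `f₁` is a CHFIF and `f₂` an AFIF
for some interpolation data over the fixed partition and parameters; members are
extended by `0` outside `I = [x 0, x N]`. -/
def S0set {N : ℕ} (x : Fin (N + 1) → ℝ) (α β γ : Fin N → ℝ) : Set (ℝ → ℝ × ℝ) :=
  {f | ContinuousOn f (Icc (x 0) (x (Fin.last N))) ∧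
       (∀ u ∉ Icc (x 0) (x (Fin.last N)), f u = 0) ∧
       ∃ t : Fin N → (ℝ × ℝ) × (ℝ × ℝ), FixEq x α β γ t f}

/-- The space `S₀¹` of CHFIFs: first components of members of `S₀`. -/
def S01set {N : ℕ} (x : Fin (N + 1) → ℝ) (α β γ : Fin N → ℝ) : Set (ℝ → ℝ) :=
  {g | ∃ f ∈ S0set x α β γ, g = fun u => (f u).1}

set_option maxHeartbeats 1000000
set_option synthInstance.maxHeartbeats 400000

namespace Stmt7Aux

variable {N : ℕ} {x : Fin (N + 1) → ℝ}

lemma x0_lt (hN : 1 ≤ N) (hx : StrictMono x) : x 0 < x (Fin.last N) := by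
  apply hx
  rw [Fin.lt_def]
  simpa using (show 0 < N by omega)

lemma LMap_left (h : x 0 < x (Fin.last N)) (n : Fin N) : LMap x n (x 0) = x n.castSucc := by
  have h' : x (Fin.last N) - x 0 ≠ 0 := sub_ne_zero.2 h.ne'
  unfold LMap; field_simp; ring

lemma LMap_right (h : x 0 < x (Fin.last N)) (n : Fin N) :
    LMap x n (x (Fin.last N)) = x n.succ := by
  have h' : x (Fin.last N) - x 0 ≠ 0 := sub_ne_zero.2 h.ne'
  unfold LMap; field_simp; ring

lemma LMap_mem (hN : 1 ≤ N) (hx : StrictMono x) (n : Fin N) {u : ℝ}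
    (hu : u ∈ Icc (x 0) (x (Fin.last N))) :
    LMap x n u ∈ Icc (x n.castSucc) (x n.succ) := by
  have hD : 0 < x (Fin.last N) - x 0 := sub_pos.2 (x0_lt hN hx)
  have hE : 0 < x n.succ - x n.castSucc := sub_pos.2 (hx (Fin.castSucc_lt_succ : n.castSucc < n.succ))
  have ha : 0 < (x n.succ - x n.castSucc) / (x (Fin.last N) - x 0) := div_pos hE hD
  obtain ⟨h1, h2⟩ := hu
  have e0 := LMap_left (x0_lt hN hx) (x := x) n
  have e1 := LMap_right (x0_lt hN hx) (x := x) n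
  constructor
  · have : LMap x n u - LMap x n (x 0)
        = ((x n.succ - x n.castSucc) / (x (Fin.last N) - x 0)) * (u - x 0) := by
      unfold LMap; ring
    nlinarith [mul_nonneg ha.le (sub_nonneg.2 h1)]
  · have : LMap x n (x (Fin.last N)) - LMap x n u
        = ((x n.succ - x n.castSucc) / (x (Fin.last N) - x 0)) * (x (Fin.last N) - u) := by
      unfold LMap; ring
    nlinarith [mul_nonneg ha.le (sub_nonneg.2 h2)]

lemma exists_subinterval (hN : 1 ≤ N) (hx : StrictMono x) {p : ℝ}
    (hp : p ∈ Icc (x 0) (x (Fin.last N))) :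
    ∃ n : Fin N, x n.castSucc ≤ p ∧ p ≤ x n.succ := by
  classical
  set T : Finset (Fin N) := Finset.univ.filter (fun n => x n.castSucc ≤ p) with hT
  have h0 : (⟨0, hN⟩ : Fin N) ∈ T := by
    simp only [hT, Finset.mem_filter, Finset.mem_univ, true_and]
    have : (⟨0, hN⟩ : Fin N).castSucc = 0 := rfl
    rw [this]; exact hp.1
  have hTne : T.Nonempty := ⟨_, h0⟩
  set n := T.max' hTne with hn
  have hnT : n ∈ T := T.max'_mem hTne
  have hnle : x n.castSucc ≤ p := by
    simpa only [hT, Finset.mem_filter, Finset.mem_univ, true_and] using hnT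
  refine ⟨n, hnle, ?_⟩
  by_contra hcon
  push_neg at hcon
  have hlt : (n : ℕ) + 1 < N := by
    rcases lt_or_eq_of_le (Nat.succ_le_of_lt n.isLt) with h | h
    · exact h
    · exfalso
      have : n.succ = Fin.last N := by
        ext; simp only [Fin.val_succ, Fin.val_last]; omega
      rw [this] at hcon
      exact absurd hp.2 (not_le.2 hcon)
  set n' : Fin N := ⟨(n : ℕ) + 1, hlt⟩ with hn'
  have hcs : n'.castSucc = n.succ := by ext; rfl
  have hn'T : n' ∈ T := by
    simp only [hT, Finset.mem_filter, Finset.mem_univ, true_and, hcs]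
    exact hcon.le
  have hle := T.le_max' n' hn'T
  rw [← hn] at hle
  have : (n : ℕ) + 1 ≤ (n : ℕ) := by simpa [hn', Fin.le_def] using hle
  omega

lemma LMap_surj (hN : 1 ≤ N) (hx : StrictMono x) {p : ℝ}
    (hp : p ∈ Icc (x 0) (x (Fin.last N))) :
    ∃ n : Fin N, ∃ u ∈ Icc (x 0) (x (Fin.last N)), LMap x n u = p := by
  obtain ⟨n, h1, h2⟩ := exists_subinterval hN hx hp
  have hD : 0 < x (Fin.last N) - x 0 := sub_pos.2 (x0_lt hN hx)
  have hE : 0 < x n.succ - x n.castSucc := sub_pos.2 (hx (Fin.castSucc_lt_succ : n.castSucc < n.succ))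
  refine ⟨n, x 0 + (p - x n.castSucc) * (x (Fin.last N) - x 0) / (x n.succ - x n.castSucc),
    ⟨?_, ?_⟩, ?_⟩
  · have : 0 ≤ (p - x n.castSucc) * (x (Fin.last N) - x 0) / (x n.succ - x n.castSucc) := by
      apply div_nonneg (mul_nonneg (by linarith) hD.le) hE.le
    linarith
  · have : (p - x n.castSucc) * (x (Fin.last N) - x 0) / (x n.succ - x n.castSucc)
        ≤ x (Fin.last N) - x 0 := by
      rw [div_le_iff₀ hE]
      nlinarith
    linarith
  · unfold LMap
    field_simp
    ring

lemma affine_abs_le {c e a b u M : ℝ} (hau : a ≤ u) (hub : u ≤ b)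
    (h1 : |c * a + e| ≤ M) (h2 : |c * b + e| ≤ M) : |c * u + e| ≤ M := by
  rw [abs_le] at h1 h2 ⊢
  rcases le_total 0 c with hc | hc
  · constructor
    · nlinarith [mul_nonneg hc (sub_nonneg.2 hau)]
    · nlinarith [mul_nonneg hc (sub_nonneg.2 hub)]
  · constructor
    · nlinarith [mul_nonpos_of_nonpos_of_nonneg hc (sub_nonneg.2 hub)]
    · nlinarith [mul_nonpos_of_nonpos_of_nonneg hc (sub_nonneg.2 hau)]


lemma key (hN : 1 ≤ N) (hx : StrictMono x) (hα : ∀ n, |α n| < 1) (hγ : ∀ n, |γ n| < 1)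
    (hβγ : ∀ n, |β n| + |γ n| < 1) :
    ∃ K : ℝ, 0 < K ∧ ∀ f g : ℝ → ℝ × ℝ, f ∈ S0set x α β γ → g ∈ S0set x α β γ →
      ∀ d : ℝ, 0 ≤ d → (∀ i, ‖f (x i) - g (x i)‖ ≤ d) →
      ∀ u ∈ Icc (x 0) (x (Fin.last N)), ‖f u - g u‖ ≤ K * d := by
  classical
  haveI : Nonempty (Fin N) := ⟨⟨0, hN⟩⟩
  have hx0N : x 0 < x (Fin.last N) := x0_lt hN hx
  set I : Set ℝ := Icc (x 0) (x (Fin.last N)) with hI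
  have hmemx : ∀ i, x i ∈ I := fun i =>
    ⟨hx.monotone (Fin.zero_le i), hx.monotone (Fin.le_last i)⟩
  set c : ℝ := Finset.univ.sup' Finset.univ_nonempty (fun n => |γ n|) with hc
  set a : ℝ := Finset.univ.sup' Finset.univ_nonempty (fun n => |α n|) with ha
  have hc1 : c < 1 := (Finset.sup'_lt_iff _).2 (fun n _ => hγ n)
  have ha1 : a < 1 := (Finset.sup'_lt_iff _).2 (fun n _ => hα n)
  have hc0 : 0 ≤ c := le_trans (abs_nonneg _)
    (Finset.le_sup' (fun n => |γ n|) (Finset.mem_univ (Classical.arbitrary (Fin N))))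
  have ha0 : 0 ≤ a := le_trans (abs_nonneg _)
    (Finset.le_sup' (fun n => |α n|) (Finset.mem_univ (Classical.arbitrary (Fin N))))
  have hγle : ∀ n, |γ n| ≤ c := fun n => by
    rw [hc]; exact Finset.le_sup' (fun n => |γ n|) (Finset.mem_univ n)
  have hαle : ∀ n, |α n| ≤ a := fun n => by
    rw [ha]; exact Finset.le_sup' (fun n => |α n|) (Finset.mem_univ n)
  have hC : (0:ℝ) < 1 - c := by linarith
  have hA : (0:ℝ) < 1 - a := by linarith
  refine ⟨(3 / (1 - c) + 3) / (1 - a) + 3 / (1 - c), by positivity, ?_⟩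
  intro f g hf hg d hd hval
  obtain ⟨hfc, hf0, tf, hft⟩ := hf
  obtain ⟨hgc, hg0, tg, hgt⟩ := hg
  -- component-wise interpolation bounds
  have hval1 : ∀ i, |(f (x i)).1 - (g (x i)).1| ≤ d := fun i => by
    have h1 : ‖((f (x i)) - (g (x i))).1‖ ≤ ‖f (x i) - g (x i)‖ := norm_fst_le _
    simpa [Real.norm_eq_abs] using h1.trans (hval i)
  have hval2 : ∀ i, |(f (x i)).2 - (g (x i)).2| ≤ d := fun i => by
    have h1 : ‖((f (x i)) - (g (x i))).2‖ ≤ ‖f (x i) - g (x i)‖ := norm_snd_le _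
    simpa [Real.norm_eq_abs] using h1.trans (hval i)
  have hβ1 : ∀ n, |β n| < 1 := fun n => lt_of_le_of_lt (le_add_of_nonneg_right (abs_nonneg (γ n))) (hβγ n)
  -- difference equations
  have heq1 : ∀ n : Fin N, ∀ u ∈ I, (f (LMap x n u)).1 - (g (LMap x n u)).1
      = α n * ((f u).1 - (g u).1) + β n * ((f u).2 - (g u).2)
        + (((tf n).1.1 - (tg n).1.1) * u + ((tf n).1.2 - (tg n).1.2)) := by
    intro n u hu
    rw [hft n u hu, hgt n u hu]; simp; ring
  have heq2 : ∀ n : Fin N, ∀ u ∈ I, (f (LMap x n u)).2 - (g (LMap x n u)).2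
      = γ n * ((f u).2 - (g u).2)
        + (((tf n).2.1 - (tg n).2.1) * u + ((tf n).2.2 - (tg n).2.2)) := by
    intro n u hu
    rw [hft n u hu, hgt n u hu]; simp; ring
  -- endpoint values of the affine differences
  have habs_comb : ∀ (A B CC : ℝ) (m1 m2 : ℝ), |A| ≤ d → |B| ≤ d → |CC| ≤ d → |m1| ≤ 1 → |m2| ≤ 1 →
      |A - m1 * B - m2 * CC| ≤ 3 * d := by
    intro A B CC m1 m2 hA' hB' hC' h1 h2
    have e1 : |m1 * B| ≤ d := by
      rw [abs_mul]; nlinarith [abs_nonneg B, abs_nonneg m1]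
    have e2 : |m2 * CC| ≤ d := by
      rw [abs_mul]; nlinarith [abs_nonneg CC, abs_nonneg m2]
    calc |A - m1 * B - m2 * CC| ≤ |A - m1 * B| + |m2 * CC| := abs_sub _ _
      _ ≤ |A| + |m1 * B| + |m2 * CC| := by linarith [abs_sub A (m1 * B)]
      _ ≤ 3 * d := by linarith
  -- bounds for P n u = Δt.1.1 * u + Δt.1.2 on I
  have hP : ∀ n : Fin N, ∀ u ∈ I,
      |((tf n).1.1 - (tg n).1.1) * u + ((tf n).1.2 - (tg n).1.2)| ≤ 3 * d := by
    intro n u hu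
    have e0 := heq1 n (x 0) (hmemx 0)
    have e1 := heq1 n (x (Fin.last N)) (hmemx (Fin.last N))
    rw [LMap_left hx0N] at e0
    rw [LMap_right hx0N] at e1
    have b0 : |((tf n).1.1 - (tg n).1.1) * (x 0) + ((tf n).1.2 - (tg n).1.2)| ≤ 3 * d := by
      have : ((tf n).1.1 - (tg n).1.1) * (x 0) + ((tf n).1.2 - (tg n).1.2)
          = ((f (x n.castSucc)).1 - (g (x n.castSucc)).1)
            - α n * ((f (x 0)).1 - (g (x 0)).1) - β n * ((f (x 0)).2 - (g (x 0)).2) := by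
        rw [e0]; ring
      rw [this]
      exact habs_comb _ _ _ _ _ (hval1 _) (hval1 _) (hval2 _) (hα n).le (hβ1 n).le
    have b1 : |((tf n).1.1 - (tg n).1.1) * (x (Fin.last N)) + ((tf n).1.2 - (tg n).1.2)| ≤ 3 * d := by
      have : ((tf n).1.1 - (tg n).1.1) * (x (Fin.last N)) + ((tf n).1.2 - (tg n).1.2)
          = ((f (x n.succ)).1 - (g (x n.succ)).1)
            - α n * ((f (x (Fin.last N))).1 - (g (x (Fin.last N))).1)
            - β n * ((f (x (Fin.last N))).2 - (g (x (Fin.last N))).2) := by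
        rw [e1]; ring
      rw [this]
      exact habs_comb _ _ _ _ _ (hval1 _) (hval1 _) (hval2 _) (hα n).le (hβ1 n).le
    exact affine_abs_le hu.1 hu.2 b0 b1
  have hQ : ∀ n : Fin N, ∀ u ∈ I,
      |((tf n).2.1 - (tg n).2.1) * u + ((tf n).2.2 - (tg n).2.2)| ≤ 3 * d := by
    intro n u hu
    have e0 := heq2 n (x 0) (hmemx 0)
    have e1 := heq2 n (x (Fin.last N)) (hmemx (Fin.last N))
    rw [LMap_left hx0N] at e0
    rw [LMap_right hx0N] at e1
    have b0 : |((tf n).2.1 - (tg n).2.1) * (x 0) + ((tf n).2.2 - (tg n).2.2)| ≤ 3 * d := by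
      have : ((tf n).2.1 - (tg n).2.1) * (x 0) + ((tf n).2.2 - (tg n).2.2)
          = ((f (x n.castSucc)).2 - (g (x n.castSucc)).2)
            - γ n * ((f (x 0)).2 - (g (x 0)).2) - 0 * (0:ℝ) := by
        rw [e0]; ring
      rw [this]
      exact habs_comb _ _ _ _ _ (hval2 _) (hval2 _) (by simpa using hd) (hγ n).le (by norm_num)
    have b1 : |((tf n).2.1 - (tg n).2.1) * (x (Fin.last N)) + ((tf n).2.2 - (tg n).2.2)| ≤ 3 * d := by
      have : ((tf n).2.1 - (tg n).2.1) * (x (Fin.last N)) + ((tf n).2.2 - (tg n).2.2)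
          = ((f (x n.succ)).2 - (g (x n.succ)).2)
            - γ n * ((f (x (Fin.last N))).2 - (g (x (Fin.last N))).2) - 0 * (0:ℝ) := by
        rw [e1]; ring
      rw [this]
      exact habs_comb _ _ _ _ _ (hval2 _) (hval2 _) (by simpa using hd) (hγ n).le (by norm_num)
    exact affine_abs_le hu.1 hu.2 b0 b1
  -- maxima
  have hIc : IsCompact I := isCompact_Icc
  have hIne : I.Nonempty := ⟨x 0, hmemx 0⟩
  have hcont : ContinuousOn (fun u => f u - g u) I := hfc.sub hgc
  obtain ⟨p2, hp2I, hp2max⟩ := hIc.exists_isMaxOn hIne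
    ((hcont.snd).abs : ContinuousOn (fun u => |(f u - g u).2|) I)
  obtain ⟨p1, hp1I, hp1max⟩ := hIc.exists_isMaxOn hIne
    ((hcont.fst).abs : ContinuousOn (fun u => |(f u - g u).1|) I)
  set M2 : ℝ := |(f p2 - g p2).2| with hM2def
  set M1 : ℝ := |(f p1 - g p1).1| with hM1def
  have hM2 : ∀ q ∈ I, |(f q).2 - (g q).2| ≤ M2 := fun q hq => by
    exact hp2max hq
  have hM1 : ∀ q ∈ I, |(f q).1 - (g q).1| ≤ M1 := fun q hq => by
    exact hp1max hq
  have hM20 : 0 ≤ M2 := abs_nonneg _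
  have hM10 : 0 ≤ M1 := abs_nonneg _
  -- contraction for second component
  have hM2b : M2 ≤ c * M2 + 3 * d := by
    obtain ⟨n, u, huI, hLu⟩ := LMap_surj hN hx hp2I
    have e := heq2 n u huI
    rw [hLu] at e
    have hstart : M2 = |γ n * ((f u).2 - (g u).2)
        + (((tf n).2.1 - (tg n).2.1) * u + ((tf n).2.2 - (tg n).2.2))| := by
      rw [hM2def]; simp only [Prod.snd_sub]; rw [e]
    calc M2 = |γ n * ((f u).2 - (g u).2)
          + (((tf n).2.1 - (tg n).2.1) * u + ((tf n).2.2 - (tg n).2.2))| := hstart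
      _ ≤ |γ n * ((f u).2 - (g u).2)| + |((tf n).2.1 - (tg n).2.1) * u + ((tf n).2.2 - (tg n).2.2)| :=
          abs_add_le _ _
      _ ≤ c * M2 + 3 * d := by
          have h1 : |γ n * ((f u).2 - (g u).2)| ≤ c * M2 := by
            rw [abs_mul]
            exact mul_le_mul (hγle n) (hM2 u huI) (abs_nonneg _) hc0
          linarith [hQ n u huI]
  have hM2fin : M2 ≤ 3 / (1 - c) * d := by
    rw [div_mul_eq_mul_div, le_div_iff₀ hC]
    nlinarith
  -- contraction for first component
  have hM1b : M1 ≤ a * M1 + M2 + 3 * d := by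
    obtain ⟨n, u, huI, hLu⟩ := LMap_surj hN hx hp1I
    have e := heq1 n u huI
    rw [hLu] at e
    have hstart : M1 = |α n * ((f u).1 - (g u).1) + β n * ((f u).2 - (g u).2)
        + (((tf n).1.1 - (tg n).1.1) * u + ((tf n).1.2 - (tg n).1.2))| := by
      rw [hM1def]; simp only [Prod.fst_sub]; rw [e]
    calc M1 = |α n * ((f u).1 - (g u).1) + β n * ((f u).2 - (g u).2)
          + (((tf n).1.1 - (tg n).1.1) * u + ((tf n).1.2 - (tg n).1.2))| := hstart
      _ ≤ |α n * ((f u).1 - (g u).1)| + |β n * ((f u).2 - (g u).2)|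
          + |((tf n).1.1 - (tg n).1.1) * u + ((tf n).1.2 - (tg n).1.2)| := by
          refine le_trans (abs_add_le _ _) ?_
          linarith [abs_add_le (α n * ((f u).1 - (g u).1)) (β n * ((f u).2 - (g u).2))]
      _ ≤ a * M1 + M2 + 3 * d := by
          have h1 : |α n * ((f u).1 - (g u).1)| ≤ a * M1 := by
            rw [abs_mul]
            exact mul_le_mul (hαle n) (hM1 u huI) (abs_nonneg _) ha0
          have h2 : |β n * ((f u).2 - (g u).2)| ≤ M2 := by
            rw [abs_mul]
            nlinarith [(hβ1 n).le, hM2 u huI, abs_nonneg (β n), abs_nonneg ((f u).2 - (g u).2)]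
          linarith [hP n u huI]
  have hM1fin : M1 ≤ (3 / (1 - c) + 3) / (1 - a) * d := by
    rw [div_mul_eq_mul_div, le_div_iff₀ hA]
    nlinarith
  -- conclude
  intro u hu
  have hn : ‖f u - g u‖ = max |(f u - g u).1| |(f u - g u).2| := by
    rw [Prod.norm_def]; simp [Real.norm_eq_abs]
  rw [hn]
  have t1 : |(f u - g u).1| ≤ (3 / (1 - c) + 3) / (1 - a) * d := by
    refine le_trans ?_ hM1fin
    simpa using hM1 u hu
  have t2 : |(f u - g u).2| ≤ 3 / (1 - c) * d := by
    refine le_trans ?_ hM2fin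
    simpa using hM2 u hu
  have hbit1 : 0 ≤ 3 / (1 - c) * d := by positivity
  have hbit2 : 0 ≤ (3 / (1 - c) + 3) / (1 - a) * d := by positivity
  apply max_le <;> nlinarith



lemma unique (hN : 1 ≤ N) (hx : StrictMono x) (hα : ∀ n, |α n| < 1) (hγ : ∀ n, |γ n| < 1)
    (hβγ : ∀ n, |β n| + |γ n| < 1) {f g : ℝ → ℝ × ℝ}
    (hf : f ∈ S0set x α β γ) (hg : g ∈ S0set x α β γ)
    (hval : ∀ i, f (x i) = g (x i)) : f = g := by
  obtain ⟨K, hK, hkey⟩ := key hN hx hα hγ hβγ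
  funext u
  by_cases hu : u ∈ Icc (x 0) (x (Fin.last N))
  · have := hkey f g hf hg 0 le_rfl (fun i => by simp [hval i]) u hu
    rw [mul_zero] at this
    exact sub_eq_zero.1 (norm_le_zero_iff.1 this)
  · rw [hf.2.1 u hu, hg.2.1 u hu]

lemma mem_add {f g : ℝ → ℝ × ℝ} (hf : f ∈ S0set x α β γ) (hg : g ∈ S0set x α β γ) :
    f + g ∈ S0set x α β γ := by
  obtain ⟨hfc, hf0, tf, hft⟩ := hf
  obtain ⟨hgc, hg0, tg, hgt⟩ := hg
  refine ⟨hfc.add hgc, fun u hu => by simp [Pi.add_apply, hf0 u hu, hg0 u hu], tf + tg, ?_⟩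
  intro n u hu
  simp only [Pi.add_apply, hft n u hu, hgt n u hu, Prod.fst_add, Prod.snd_add,
    Prod.mk_add_mk, Prod.mk.injEq]
  constructor <;> ring

lemma mem_smul (r : ℝ) {f : ℝ → ℝ × ℝ} (hf : f ∈ S0set x α β γ) :
    r • f ∈ S0set x α β γ := by
  obtain ⟨hfc, hf0, tf, hft⟩ := hf
  refine ⟨hfc.const_smul r, fun u hu => by simp [Pi.smul_apply, hf0 u hu], r • tf, ?_⟩
  intro n u hu
  simp only [Pi.smul_apply, hft n u hu, Prod.smul_fst, Prod.smul_snd, Prod.smul_mk,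
    smul_eq_mul, Prod.mk.injEq]
  constructor <;> ring

lemma memL2 (hN : 1 ≤ N) (hx : StrictMono x) {f : ℝ → ℝ × ℝ} (hf : f ∈ S0set x α β γ) :
    MemLp f 2 (volume : Measure ℝ) := by
  have hind : f = (Icc (x 0) (x (Fin.last N))).indicator f := by
    funext u
    by_cases h : u ∈ Icc (x 0) (x (Fin.last N))
    · simp [indicator_of_mem h]
    · simp [indicator_of_notMem h, hf.2.1 u h]
  rw [hind, memLp_indicator_iff_restrict measurableSet_Icc]
  obtain ⟨C, hC⟩ := isCompact_Icc.exists_bound_of_continuousOn hf.1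
  exact MemLp.of_bound (hf.1.aestronglyMeasurable measurableSet_Icc) C
    ((ae_restrict_iff' measurableSet_Icc).2 (ae_of_all _ hC))

lemma memL2' (hN : 1 ≤ N) (hx : StrictMono x) {f : ℝ → ℝ × ℝ} (hf : f ∈ S0set x α β γ) :
    MemLp (fun u => (f u).1) 2 (volume : Measure ℝ) :=
  (ContinuousLinearMap.fst ℝ ℝ ℝ).comp_memLp' (memL2 hN hx hf)


end Stmt7Aux

/-- The map `θ` (and its inverse) is continuous from `(ℝ^{N+1} × ℝ^{N+1}, max-metric)`
to `(S₀, d*)` where `d*` is the sup-metric on `I`; consequently `S₀` is a closed and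
complete subspace of `L²(ℝ, ℝ²)` and `S₀¹` is a closed subspace of `L²(ℝ)`
(members being extended by zero outside `I`). -/
theorem stmt7 {N : ℕ} (hN : 1 ≤ N) (x : Fin (N + 1) → ℝ) (hx : StrictMono x)
    (α β γ : Fin N → ℝ) (hα : ∀ n, |α n| < 1) (hγ : ∀ n, |γ n| < 1)
    (hβγ : ∀ n, |β n| + |γ n| < 1)
    (θ : ((Fin (N + 1) → ℝ) × (Fin (N + 1) → ℝ)) → (ℝ → ℝ × ℝ))
    (hθmem : ∀ v, θ v ∈ S0set x α β γ)
    (hθinterp : ∀ (v : (Fin (N + 1) → ℝ) × (Fin (N + 1) → ℝ)) (i : Fin (N + 1)),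
      θ v (x i) = (v.1 i, v.2 i)) :
    (∀ v : (Fin (N + 1) → ℝ) × (Fin (N + 1) → ℝ), ∀ ε > (0 : ℝ), ∃ δ > (0 : ℝ),
      ∀ w, dist v w < δ →
        ∀ u ∈ Icc (x 0) (x (Fin.last N)), ‖θ v u - θ w u‖ ≤ ε) ∧
    (∀ v : (Fin (N + 1) → ℝ) × (Fin (N + 1) → ℝ), ∀ ε > (0 : ℝ), ∃ δ > (0 : ℝ),
      ∀ w, (∀ u ∈ Icc (x 0) (x (Fin.last N)), ‖θ v u - θ w u‖ ≤ δ) →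
        dist v w ≤ ε) ∧
    IsClosed {g : Lp (ℝ × ℝ) 2 (volume : Measure ℝ) |
      ∃ f ∈ S0set x α β γ, ⇑g =ᵐ[volume] f} ∧
    IsComplete {g : Lp (ℝ × ℝ) 2 (volume : Measure ℝ) |
      ∃ f ∈ S0set x α β γ, ⇑g =ᵐ[volume] f} ∧
    IsClosed {g : Lp ℝ 2 (volume : Measure ℝ) |
      ∃ f₁ ∈ S01set x α β γ, ⇑g =ᵐ[volume] f₁} := by
  classical
  obtain ⟨K, hK, hkey⟩ := Stmt7Aux.key hN hx hα hγ hβγ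
  have hxi : ∀ i, x i ∈ Icc (x 0) (x (Fin.last N)) := fun i =>
    ⟨hx.monotone (Fin.zero_le i), hx.monotone (Fin.le_last i)⟩
  have hvb : ∀ v w : (Fin (N + 1) → ℝ) × (Fin (N + 1) → ℝ), ∀ i,
      ‖θ v (x i) - θ w (x i)‖ ≤ dist v w := by
    intro v w i
    rw [hθinterp, hθinterp, ← dist_eq_norm]
    calc dist ((v.1 i, v.2 i) : ℝ × ℝ) ((w.1 i, w.2 i) : ℝ × ℝ)
        = max (dist (v.1 i) (w.1 i)) (dist (v.2 i) (w.2 i)) := Prod.dist_eq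
      _ ≤ max (dist v.1 w.1) (dist v.2 w.2) :=
          max_le_max (dist_le_pi_dist _ _ i) (dist_le_pi_dist _ _ i)
      _ = dist v w := Prod.dist_eq.symm
  have huniq : ∀ f g : ℝ → ℝ × ℝ, f ∈ S0set x α β γ → g ∈ S0set x α β γ →
      (∀ i, f (x i) = g (x i)) → f = g :=
    fun f g hf hg h => Stmt7Aux.unique hN hx hα hγ hβγ hf hg h
  have hadd : ∀ v w, θ (v + w) = θ v + θ w := by
    intro v w
    apply huniq _ _ (hθmem _) (Stmt7Aux.mem_add (hθmem v) (hθmem w))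
    intro i
    simp [hθinterp, Prod.mk_add_mk]
  have hsmul : ∀ (r : ℝ) v, θ (r • v) = r • θ v := by
    intro r v
    apply huniq _ _ (hθmem _) (Stmt7Aux.mem_smul r (hθmem v))
    intro i
    simp [hθinterp, Prod.smul_mk]
  -- the linear map into L²(ℝ, ℝ²)
  let T : ((Fin (N + 1) → ℝ) × (Fin (N + 1) → ℝ)) →ₗ[ℝ] Lp (ℝ × ℝ) 2 (volume : Measure ℝ) :=
    { toFun := fun v => (Stmt7Aux.memL2 hN hx (hθmem v)).toLp (θ v)
      map_add' := by
        intro v w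
        apply Lp.ext
        filter_upwards [(Stmt7Aux.memL2 hN hx (hθmem (v + w))).coeFn_toLp,
          (Stmt7Aux.memL2 hN hx (hθmem v)).coeFn_toLp,
          (Stmt7Aux.memL2 hN hx (hθmem w)).coeFn_toLp,
          Lp.coeFn_add ((Stmt7Aux.memL2 hN hx (hθmem v)).toLp (θ v))
            ((Stmt7Aux.memL2 hN hx (hθmem w)).toLp (θ w))] with u e1 e2 e3 e4
        rw [e1, e4, hadd]
        simp [e2, e3]
      map_smul' := by
        intro r v
        simp only [RingHom.id_apply]
        apply Lp.ext
        filter_upwards [(Stmt7Aux.memL2 hN hx (hθmem (r • v))).coeFn_toLp,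
          (Stmt7Aux.memL2 hN hx (hθmem v)).coeFn_toLp,
          Lp.coeFn_smul r ((Stmt7Aux.memL2 hN hx (hθmem v)).toLp (θ v))] with u e1 e2 e3
        rw [e1, e3, hsmul]
        simp [e2] }
  let T1 : ((Fin (N + 1) → ℝ) × (Fin (N + 1) → ℝ)) →ₗ[ℝ] Lp ℝ 2 (volume : Measure ℝ) :=
    { toFun := fun v => (Stmt7Aux.memL2' hN hx (hθmem v)).toLp (fun u => (θ v u).1)
      map_add' := by
        intro v w
        apply Lp.ext
        filter_upwards [(Stmt7Aux.memL2' hN hx (hθmem (v + w))).coeFn_toLp,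
          (Stmt7Aux.memL2' hN hx (hθmem v)).coeFn_toLp,
          (Stmt7Aux.memL2' hN hx (hθmem w)).coeFn_toLp,
          Lp.coeFn_add ((Stmt7Aux.memL2' hN hx (hθmem v)).toLp (fun u => (θ v u).1))
            ((Stmt7Aux.memL2' hN hx (hθmem w)).toLp (fun u => (θ w u).1))] with u e1 e2 e3 e4
        rw [e1, e4, hadd]
        simp [e2, e3]
      map_smul' := by
        intro r v
        simp only [RingHom.id_apply]
        apply Lp.ext
        filter_upwards [(Stmt7Aux.memL2' hN hx (hθmem (r • v))).coeFn_toLp,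
          (Stmt7Aux.memL2' hN hx (hθmem v)).coeFn_toLp,
          Lp.coeFn_smul r ((Stmt7Aux.memL2' hN hx (hθmem v)).toLp (fun u => (θ v u).1))]
          with u e1 e2 e3
        rw [e1, e3, hsmul]
        simp [e2] }
  have hSeq : {g : Lp (ℝ × ℝ) 2 (volume : Measure ℝ) | ∃ f ∈ S0set x α β γ, ⇑g =ᵐ[volume] f}
      = ↑(LinearMap.range T) := by
    ext g
    simp only [Set.mem_setOf_eq, SetLike.mem_coe, LinearMap.mem_range]
    constructor
    · rintro ⟨f, hfS, hae⟩
      refine ⟨((fun i => (f (x i)).1), (fun i => (f (x i)).2)), ?_⟩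
      have hθv : θ ((fun i => (f (x i)).1), (fun i => (f (x i)).2)) = f := by
        apply huniq _ _ (hθmem _) hfS
        intro i
        rw [hθinterp]
      apply Lp.ext
      show ⇑((Stmt7Aux.memL2 hN hx (hθmem _)).toLp (θ _)) =ᵐ[volume] ⇑g
      refine (MemLp.coeFn_toLp _).trans ?_
      rw [hθv]
      exact hae.symm
    · rintro ⟨v, rfl⟩
      exact ⟨θ v, hθmem v, MemLp.coeFn_toLp (Stmt7Aux.memL2 hN hx (hθmem v))⟩
  have hSeq1 : {g : Lp ℝ 2 (volume : Measure ℝ) | ∃ f₁ ∈ S01set x α β γ, ⇑g =ᵐ[volume] f₁}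
      = ↑(LinearMap.range T1) := by
    ext g
    simp only [Set.mem_setOf_eq, SetLike.mem_coe, LinearMap.mem_range]
    constructor
    · rintro ⟨f₁, ⟨f, hfS, rfl⟩, hae⟩
      refine ⟨((fun i => (f (x i)).1), (fun i => (f (x i)).2)), ?_⟩
      have hθv : θ ((fun i => (f (x i)).1), (fun i => (f (x i)).2)) = f := by
        apply huniq _ _ (hθmem _) hfS
        intro i
        rw [hθinterp]
      apply Lp.ext
      show ⇑((Stmt7Aux.memL2' hN hx (hθmem _)).toLp (fun u => (θ _ u).1)) =ᵐ[volume] ⇑g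
      refine (MemLp.coeFn_toLp _).trans ?_
      rw [hθv]
      exact hae.symm
    · rintro ⟨v, rfl⟩
      exact ⟨fun u => (θ v u).1, ⟨θ v, hθmem v, rfl⟩,
        MemLp.coeFn_toLp (Stmt7Aux.memL2' hN hx (hθmem v))⟩
  haveI hfd : FiniteDimensional ℝ (LinearMap.range T) := LinearMap.finiteDimensional_range T
  haveI hfd1 : FiniteDimensional ℝ (LinearMap.range T1) := LinearMap.finiteDimensional_range T1
  refine ⟨?_, ?_, ?_, ?_, ?_⟩
  · -- continuity of θ
    intro v ε hε
    refine ⟨ε / K, by positivity, fun w hw u hu => ?_⟩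
    refine (hkey (θ v) (θ w) (hθmem v) (hθmem w) (dist v w) dist_nonneg (hvb v w) u hu).trans ?_
    calc K * dist v w ≤ K * (ε / K) := by nlinarith
      _ = ε := by field_simp
  · -- continuity of θ⁻¹
    intro v ε hε
    refine ⟨ε, hε, fun w hwb => ?_⟩
    rw [Prod.dist_eq]
    apply max_le <;> rw [dist_pi_le_iff hε.le] <;> intro i
    · have h := hwb (x i) (hxi i)
      rw [hθinterp, hθinterp] at h
      calc dist (v.1 i) (w.1 i)
          = ‖(((v.1 i, v.2 i) : ℝ × ℝ) - ((w.1 i, w.2 i) : ℝ × ℝ)).1‖ := by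
            simp [dist_eq_norm]
        _ ≤ ‖((v.1 i, v.2 i) : ℝ × ℝ) - ((w.1 i, w.2 i) : ℝ × ℝ)‖ := norm_fst_le _
        _ ≤ ε := h
    · have h := hwb (x i) (hxi i)
      rw [hθinterp, hθinterp] at h
      calc dist (v.2 i) (w.2 i)
          = ‖(((v.1 i, v.2 i) : ℝ × ℝ) - ((w.1 i, w.2 i) : ℝ × ℝ)).2‖ := by
            simp [dist_eq_norm]
        _ ≤ ‖((v.1 i, v.2 i) : ℝ × ℝ) - ((w.1 i, w.2 i) : ℝ × ℝ)‖ := norm_snd_le _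
        _ ≤ ε := h
  · rw [hSeq]
    exact Submodule.closed_of_finiteDimensional _
  · rw [hSeq]
    exact (Submodule.closed_of_finiteDimensional _).isComplete
  · rw [hSeq1]
    exact Submodule.closed_of_finiteDimensional _
end

section
/- Let f = (f_1, f_2) and f̂ = (f̂_1, f̂_2) be the continuous fixed points associated with two CHFIF systems over the same partition x_0 < … < x_N, with parameters α_n, β_n and polynomials p_n for f, and α̂_n, β̂_n and p̂_n for f̂. Then the L²(I) inner products satisfy ⟨f_1, f̂_1⟩ = [ Σ_{n=1}^{N} a_n ( α_n β̂_n ⟨f_1, f̂_2⟩ + β_n α̂_n ⟨f_2, f̂_1⟩ + β_n β̂_n ⟨f_2, f̂_2⟩ + α_n ⟨f_1, p̂_n⟩ + α̂_n ⟨f̂_1, p_n⟩ + β_n ⟨f_2, p̂_n⟩ + β̂_n ⟨f̂_2, p_n⟩ + ⟨p_n, p̂_n⟩ ) ] / ( 1 − Σ_{n=1}^{N} a_n α_n α̂_n ), where a_n = (x_n − x_{n−1})/(x_N − x_0) and ⟨g, h⟩ = ∫_I g(x) h(x) dx. -/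
open Set intervalIntegral MeasureTheory


lemma aux_cov (A B P Q c d : ℝ) (hc : c ≠ 0) (e1 : c * A + d = P) (e2 : c * B + d = Q)
    (g : ℝ → ℝ) : (∫ u in P..Q, g u) = c * ∫ t in A..B, g (c * t + d) := by
  rw [intervalIntegral.integral_comp_mul_add g hc d, e1, e2, smul_eq_mul, ← mul_assoc,
    mul_inv_cancel₀ hc, one_mul]

lemma aux_expand (A B α β αh βh pc pd phc phd : ℝ) (hAB : A ≤ B)
    (f₁ f₂ fh₁ fh₂ : ℝ → ℝ)
    (h1 : ContinuousOn f₁ (Icc A B)) (h2 : ContinuousOn f₂ (Icc A B))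
    (h3 : ContinuousOn fh₁ (Icc A B)) (h4 : ContinuousOn fh₂ (Icc A B)) :
    (∫ t in A..B, (α * f₁ t + β * f₂ t + (pc * t + pd)) *
        (αh * fh₁ t + βh * fh₂ t + (phc * t + phd))) =
      α * αh * (∫ t in A..B, f₁ t * fh₁ t) +
      (α * βh * (∫ t in A..B, f₁ t * fh₂ t) +
       β * αh * (∫ t in A..B, f₂ t * fh₁ t) +
       β * βh * (∫ t in A..B, f₂ t * fh₂ t) +
       α * (∫ t in A..B, f₁ t * (phc * t + phd)) +
       αh * (∫ t in A..B, fh₁ t * (pc * t + pd)) +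
       β * (∫ t in A..B, f₂ t * (phc * t + phd)) +
       βh * (∫ t in A..B, fh₂ t * (pc * t + pd)) +
       (∫ t in A..B, (pc * t + pd) * (phc * t + phd))) := by
  have hIcc : uIcc A B = Icc A B := uIcc_of_le hAB
  have hInt : ∀ g : ℝ → ℝ, ContinuousOn g (Icc A B) → IntervalIntegrable g volume A B :=
    fun g hg => ContinuousOn.intervalIntegrable (by rwa [hIcc])
  have hp : ∀ c d : ℝ, ContinuousOn (fun u : ℝ => c * u + d) (Icc A B) := by
    intro c d; fun_prop
  have i11 := hInt (fun t => f₁ t * fh₁ t) (h1.mul h3)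
  have i12 := hInt (fun t => f₁ t * fh₂ t) (h1.mul h4)
  have i21 := hInt (fun t => f₂ t * fh₁ t) (h2.mul h3)
  have i22 := hInt (fun t => f₂ t * fh₂ t) (h2.mul h4)
  have i1p := hInt (fun t => f₁ t * (phc * t + phd)) (h1.mul (hp phc phd))
  have ih1p := hInt (fun t => fh₁ t * (pc * t + pd)) (h3.mul (hp pc pd))
  have i2p := hInt (fun t => f₂ t * (phc * t + phd)) (h2.mul (hp phc phd))
  have ih2p := hInt (fun t => fh₂ t * (pc * t + pd)) (h4.mul (hp pc pd))
  have ipp := hInt (fun t => (pc * t + pd) * (phc * t + phd)) ((hp pc pd).mul (hp phc phd))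
  have T : ∀ (g h : ℝ → ℝ), IntervalIntegrable g volume A B →
      IntervalIntegrable h volume A B →
      (∫ t in A..B, (g t + h t)) = (∫ t in A..B, g t) + ∫ t in A..B, h t :=
    fun g h hg hh => integral_add hg hh
  have j9 := ipp
  have j8 := (ih2p.const_mul (βh)).add j9
  have j7 := (i2p.const_mul (β)).add j8
  have j6 := (ih1p.const_mul (αh)).add j7
  have j5 := (i1p.const_mul (α)).add j6
  have j4 := (i22.const_mul (β * βh)).add j5
  have j3 := (i21.const_mul (β * αh)).add j4
  have j2 := (i12.const_mul (α * βh)).add j3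
  rw [intervalIntegral.integral_congr (g := fun t =>
      α * αh * (f₁ t * fh₁ t) +
      (α * βh * (f₁ t * fh₂ t) +
      (β * αh * (f₂ t * fh₁ t) +
      (β * βh * (f₂ t * fh₂ t) +
      (α * (f₁ t * (phc * t + phd)) +
      (αh * (fh₁ t * (pc * t + pd)) +
      (β * (f₂ t * (phc * t + phd)) +
      (βh * (fh₂ t * (pc * t + pd)) +
      (pc * t + pd) * (phc * t + phd)))))))))
      (fun t _ => by ring)]
  rw [T _ _ (i11.const_mul (α * αh)) j2,
      T _ _ (i12.const_mul (α * βh)) j3,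
      T _ _ (i21.const_mul (β * αh)) j4,
      T _ _ (i22.const_mul (β * βh)) j5,
      T _ _ (i1p.const_mul (α)) j6,
      T _ _ (ih1p.const_mul (αh)) j7,
      T _ _ (i2p.const_mul (β)) j8,
      T _ _ (ih2p.const_mul (βh)) j9]
  simp only [intervalIntegral.integral_const_mul]
  ring


/-- The inner-product identity for two CHFIF systems over the same partition:
`⟨f₁, f̂₁⟩` equals the indicated rational expression in the parameters, the mixed
inner products and the inner products against the linear polynomials
`p_n u = pc n * u + pd n` and `p̂_n u = phc n * u + phd n`.  Here `f = (f₁, f₂)` and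
`f̂ = (f̂₁, f̂₂)` are the continuous fixed points of the two systems, satisfying the
recurrences `f₁ ∘ L_n = α_n f₁ + β_n f₂ + p_n`, `f₂ ∘ L_n = γ_n f₂ + q_n` and the
hatted analogues, and `⟨g, h⟩ = ∫_{x 0}^{x N} g u * h u du`. -/
theorem stmt9 {N : ℕ} (hN : 1 ≤ N) (x : Fin (N + 1) → ℝ) (hx : StrictMono x)
    (α β γ αh βh γh : Fin N → ℝ)
    (hα : ∀ n, |α n| < 1) (hγ : ∀ n, |γ n| < 1) (hβγ : ∀ n, |β n| + |γ n| < 1)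
    (hαh : ∀ n, |αh n| < 1) (hγh : ∀ n, |γh n| < 1)
    (hβγh : ∀ n, |βh n| + |γh n| < 1)
    (pc pd qc qd phc phd qhc qhd : Fin N → ℝ)
    (f₁ f₂ fh₁ fh₂ : ℝ → ℝ)
    (hcf₁ : ContinuousOn f₁ (Icc (x 0) (x (Fin.last N))))
    (hcf₂ : ContinuousOn f₂ (Icc (x 0) (x (Fin.last N))))
    (hcfh₁ : ContinuousOn fh₁ (Icc (x 0) (x (Fin.last N))))
    (hcfh₂ : ContinuousOn fh₂ (Icc (x 0) (x (Fin.last N))))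
    (hrec₁ : ∀ n : Fin N, ∀ u ∈ Icc (x 0) (x (Fin.last N)),
      f₁ (LMap x n u) = α n * f₁ u + β n * f₂ u + (pc n * u + pd n))
    (hrec₂ : ∀ n : Fin N, ∀ u ∈ Icc (x 0) (x (Fin.last N)),
      f₂ (LMap x n u) = γ n * f₂ u + (qc n * u + qd n))
    (hrech₁ : ∀ n : Fin N, ∀ u ∈ Icc (x 0) (x (Fin.last N)),
      fh₁ (LMap x n u) = αh n * fh₁ u + βh n * fh₂ u + (phc n * u + phd n))
    (hrech₂ : ∀ n : Fin N, ∀ u ∈ Icc (x 0) (x (Fin.last N)),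
      fh₂ (LMap x n u) = γh n * fh₂ u + (qhc n * u + qhd n)) :
    (∫ u in (x 0)..(x (Fin.last N)), f₁ u * fh₁ u) =
      (∑ n : Fin N, ((x n.succ - x n.castSucc) / (x (Fin.last N) - x 0)) *
        (α n * βh n * (∫ u in (x 0)..(x (Fin.last N)), f₁ u * fh₂ u) +
         β n * αh n * (∫ u in (x 0)..(x (Fin.last N)), f₂ u * fh₁ u) +
         β n * βh n * (∫ u in (x 0)..(x (Fin.last N)), f₂ u * fh₂ u) +
         α n * (∫ u in (x 0)..(x (Fin.last N)), f₁ u * (phc n * u + phd n)) +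
         αh n * (∫ u in (x 0)..(x (Fin.last N)), fh₁ u * (pc n * u + pd n)) +
         β n * (∫ u in (x 0)..(x (Fin.last N)), f₂ u * (phc n * u + phd n)) +
         βh n * (∫ u in (x 0)..(x (Fin.last N)), fh₂ u * (pc n * u + pd n)) +
         (∫ u in (x 0)..(x (Fin.last N)), (pc n * u + pd n) * (phc n * u + phd n)))) /
      (1 - ∑ n : Fin N, ((x n.succ - x n.castSucc) / (x (Fin.last N) - x 0)) *
        (α n * αh n)) := by

  classical
  have h0N : (0 : Fin (N + 1)) < Fin.last N := by
    rw [Fin.lt_def]; simp [Fin.last]; omega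
  have hAB : x 0 < x (Fin.last N) := hx h0N
  set A := x 0 with hA
  set B := x (Fin.last N) with hB
  have hBAne : B - A ≠ 0 := sub_ne_zero.mpr hAB.ne'
  have hmono := hx.monotone
  have hlt : ∀ n : Fin N, x n.castSucc < x n.succ := fun n => hx (Fin.castSucc_lt_succ (i := n))
  -- the per-subinterval identity
  have key : ∀ n : Fin N,
      (∫ u in (x n.castSucc)..(x n.succ), f₁ u * fh₁ u) =
      ((x n.succ - x n.castSucc) / (B - A)) *
        (α n * αh n * (∫ u in A..B, f₁ u * fh₁ u) +
         (α n * βh n * (∫ u in A..B, f₁ u * fh₂ u) +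
          β n * αh n * (∫ u in A..B, f₂ u * fh₁ u) +
          β n * βh n * (∫ u in A..B, f₂ u * fh₂ u) +
          α n * (∫ u in A..B, f₁ u * (phc n * u + phd n)) +
          αh n * (∫ u in A..B, fh₁ u * (pc n * u + pd n)) +
          β n * (∫ u in A..B, f₂ u * (phc n * u + phd n)) +
          βh n * (∫ u in A..B, fh₂ u * (pc n * u + pd n)) +
          (∫ u in A..B, (pc n * u + pd n) * (phc n * u + phd n)))) := by
    intro n
    have hcne : (x n.succ - x n.castSucc) / (B - A) ≠ 0 :=
      div_ne_zero (sub_ne_zero.mpr (hlt n).ne') hBAne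
    have e1 : ((x n.succ - x n.castSucc) / (B - A)) * A +
        (B * x n.castSucc - A * x n.succ) / (B - A) = x n.castSucc := by
      field_simp; ring
    have e2 : ((x n.succ - x n.castSucc) / (B - A)) * B +
        (B * x n.castSucc - A * x n.succ) / (B - A) = x n.succ := by
      field_simp; ring
    rw [aux_cov A B (x n.castSucc) (x n.succ) _ _ hcne e1 e2 (fun u => f₁ u * fh₁ u)]
    congr 1
    rw [intervalIntegral.integral_congr (g := fun t =>
        (α n * f₁ t + β n * f₂ t + (pc n * t + pd n)) *
        (αh n * fh₁ t + βh n * fh₂ t + (phc n * t + phd n)))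
        (fun t ht => by
          rw [uIcc_of_le hAB.le] at ht
          show f₁ (LMap x n t) * fh₁ (LMap x n t) = _
          rw [hrec₁ n t ht, hrech₁ n t ht])]
    exact aux_expand A B (α n) (β n) (αh n) (βh n) (pc n) (pd n) (phc n) (phd n)
      hAB.le f₁ f₂ fh₁ fh₂ hcf₁ hcf₂ hcfh₁ hcfh₂
  -- auxiliary reindexing map
  set y : ℕ → ℝ := fun k => x ⟨min k N, by omega⟩ with hy
  have hy0 : y 0 = A := by
    rw [hy]; simp only; rw [hA]; congr 1
  have hyN : y N = B := by
    rw [hy]; simp only; rw [hB]; congr 1; ext; simp [Fin.last]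
  have hycast : ∀ n : Fin N, y n.val = x n.castSucc := by
    intro n; rw [hy]; simp only; congr 1; ext
    simp only [Fin.coe_castSucc]
    have := n.isLt; omega
  have hysucc : ∀ n : Fin N, y (n.val + 1) = x n.succ := by
    intro n; rw [hy]; simp only; congr 1; ext
    simp only [Fin.val_succ]
    have := n.isLt; omega
  -- splitting the integral over the partition
  have hsplit : (∫ u in A..B, f₁ u * fh₁ u) =
      ∑ n : Fin N, ∫ u in (x n.castSucc)..(x n.succ), f₁ u * fh₁ u := by
    have hint : ∀ k < N, IntervalIntegrable (fun u => f₁ u * fh₁ u) volume (y k) (y (k + 1)) := by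
      intro k hk
      apply ContinuousOn.intervalIntegrable
      apply (hcf₁.mul hcfh₁).mono
      rw [uIcc_of_le (hmono (Fin.mk_le_mk.mpr (by omega)))]
      exact Icc_subset_Icc (hmono (Fin.zero_le _)) (hmono (Fin.le_last _))
    rw [← hy0, ← hyN, ← intervalIntegral.sum_integral_adjacent_intervals hint,
      ← Fin.sum_univ_eq_sum_range (fun k => ∫ u in (y k)..(y (k + 1)), f₁ u * fh₁ u) N]
    exact Finset.sum_congr rfl fun n _ => by rw [hycast n, hysucc n]
  -- telescoping sum of the lengths
  have hsum1 : ∑ n : Fin N, (x n.succ - x n.castSucc) = B - A := by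
    have h := Finset.sum_range_sub y N
    rw [hy0, hyN] at h
    rw [← h, ← Fin.sum_univ_eq_sum_range (fun k => y (k + 1) - y k) N]
    exact Finset.sum_congr rfl fun n _ => by rw [hycast n, hysucc n]
  have hsuma : ∑ n : Fin N, (x n.succ - x n.castSucc) / (B - A) = 1 := by
    rw [← Finset.sum_div, hsum1, div_self hBAne]
  have haPos : ∀ n : Fin N, 0 < (x n.succ - x n.castSucc) / (B - A) :=
    fun n => div_pos (sub_pos.mpr (hlt n)) (sub_pos.mpr hAB)
  -- the denominator is positive
  have hD : (∑ n : Fin N, ((x n.succ - x n.castSucc) / (B - A)) * (α n * αh n)) < 1 := by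
    calc (∑ n : Fin N, ((x n.succ - x n.castSucc) / (B - A)) * (α n * αh n))
        < ∑ n : Fin N, (x n.succ - x n.castSucc) / (B - A) := by
          refine Finset.sum_lt_sum_of_nonempty ⟨⟨0, hN⟩, Finset.mem_univ _⟩ fun n _ => ?_
          have h1 := hα n
          have h2 := hαh n
          have h3 : α n * αh n ≤ |α n| * |αh n| := by
            rw [← abs_mul]; exact le_abs_self _
          have h4 : |α n| * |αh n| < 1 := by
            nlinarith [abs_nonneg (α n), abs_nonneg (αh n)]
          nlinarith [haPos n]
      _ = 1 := hsuma
  have hDne : 1 - (∑ n : Fin N, ((x n.succ - x n.castSucc) / (B - A)) * (α n * αh n)) ≠ 0 :=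
    (sub_pos.mpr hD).ne'
  -- the main linear equation
  have hmain : (∫ u in A..B, f₁ u * fh₁ u) =
      (∑ n : Fin N, ((x n.succ - x n.castSucc) / (B - A)) * (α n * αh n)) *
        (∫ u in A..B, f₁ u * fh₁ u) +
      ∑ n : Fin N, ((x n.succ - x n.castSucc) / (B - A)) *
        (α n * βh n * (∫ u in A..B, f₁ u * fh₂ u) +
         β n * αh n * (∫ u in A..B, f₂ u * fh₁ u) +
         β n * βh n * (∫ u in A..B, f₂ u * fh₂ u) +
         α n * (∫ u in A..B, f₁ u * (phc n * u + phd n)) +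
         αh n * (∫ u in A..B, fh₁ u * (pc n * u + pd n)) +
         β n * (∫ u in A..B, f₂ u * (phc n * u + phd n)) +
         βh n * (∫ u in A..B, fh₂ u * (pc n * u + pd n)) +
         (∫ u in A..B, (pc n * u + pd n) * (phc n * u + phd n))) := by
    conv_lhs => rw [hsplit]
    rw [Finset.sum_mul, ← Finset.sum_add_distrib]
    exact Finset.sum_congr rfl fun n _ => by rw [key n]; ring
  rw [eq_div_iff hDne]
  linear_combination hmain
end

section
/- The functions f̃_{0,1}, f̃_{1,1}, f̃_{2,1}, f̃_{3,1} are pairwise orthogonal CHFIFs in L²[0,1] if and only if all of the following hold: (a) |α_1| < 1, |α_2| < 1, |γ_1| < 1, |γ_2| < 1, |β_1| + |γ_1| < 1 and |β_2| + |γ_2| < 1; (b) r_1 = (4 − 4α_1² − 6α_2 − 2α_1α_2 + 3α_1²α_2 − 4α_2² + 3α_2³)/(4(−4 + α_1² − α_1α_2 + α_2²)), s_1 = (4 − 6α_1 − 4α_1² + 3α_1³ − 2α_1α_2 − 4α_2² + 3α_1α_2²)/(4(−4 + α_1² − α_1α_2 + α_2²)), and u_{1,1} is the unique value for which ⟨f̃_{1,1},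 f̃_{3,1}⟩ = 0; (c) ρ(α_1, α_2) = 0; (d) ζ := ⟨f̃_{0,1}, f̃_{3,1}⟩ = 0 and η := ⟨f̃_{2,1}, f̃_{3,1}⟩ = 0. -/
open Set

/-- `f` is the CHFIF on `[0,1]` (partition `0, 1/2, 1`) with hidden component `g`,
parameters `α₁, α₂, β₁, β₂`, through the data `(0, w₀), (1/2, w₁), (1, w₂)`:
`f` is continuous, satisfies the fixed-point recurrences with some linear
polynomials `p₁, p₂` (determined by the join-up conditions), and interpolates. -/
def IsCHFIF2 (α₁ α₂ β₁ β₂ : ℝ) (f g : ℝ → ℝ) (w₀ w₁ w₂ : ℝ) : Prop :=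
  ContinuousOn f (Icc (0 : ℝ) 1) ∧
  (∃ c₁ d₁ c₂ d₂ : ℝ, ∀ u ∈ Icc (0 : ℝ) 1,
    f (u / 2) = α₁ * f u + β₁ * g u + (c₁ * u + d₁) ∧
    f ((u + 1) / 2) = α₂ * f u + β₂ * g u + (c₂ * u + d₂)) ∧
  f 0 = w₀ ∧ f (1 / 2) = w₁ ∧ f 1 = w₂

/-- `g` is the AFIF on `[0,1]` (partition `0, 1/2, 1`) with parameters `γ₁, γ₂`
through the data `(0, w₀), (1/2, w₁), (1, w₂)`. -/
def IsAFIF2 (γ₁ γ₂ : ℝ) (g : ℝ → ℝ) (w₀ w₁ w₂ : ℝ) : Prop :=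
  ContinuousOn g (Icc (0 : ℝ) 1) ∧
  (∃ e₁ h₁ e₂ h₂ : ℝ, ∀ u ∈ Icc (0 : ℝ) 1,
    g (u / 2) = γ₁ * g u + (e₁ * u + h₁) ∧
    g ((u + 1) / 2) = γ₂ * g u + (e₂ * u + h₂)) ∧
  g 0 = w₀ ∧ g (1 / 2) = w₁ ∧ g 1 = w₂

/-- The polynomial `ρ(α₁, α₂)` of the paper. -/
def rho (a₁ a₂ : ℝ) : ℝ :=
  8 + 12 * a₁ - 28 * a₁ ^ 2 + 6 * a₁ ^ 3 + 2 * a₁ ^ 4 + 12 * a₂ - 14 * a₁ * a₂ +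
    18 * a₁ ^ 2 * a₂ - 7 * a₁ ^ 3 * a₂ - 28 * a₂ ^ 2 + 18 * a₁ * a₂ ^ 2 +
    6 * a₂ ^ 3 - 7 * a₁ * a₂ ^ 3 + 2 * a₂ ^ 4

open intervalIntegral MeasureTheory

section Aux

lemma my_sub1 : uIcc (0:ℝ) (1/2) ⊆ Icc (0:ℝ) 1 := by
  rw [uIcc_of_le (by norm_num)]
  exact Icc_subset_Icc le_rfl (by norm_num)

lemma my_sub2 : uIcc (1/2:ℝ) 1 ⊆ Icc (0:ℝ) 1 := by
  rw [uIcc_of_le (by norm_num)]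
  exact Icc_subset_Icc (by norm_num) le_rfl

lemma my_sub3 : uIcc (0:ℝ) 1 ⊆ Icc (0:ℝ) 1 := by
  rw [uIcc_of_le (by norm_num)]

lemma split_int (F : ℝ → ℝ) (hF : ContinuousOn F (Icc 0 1)) :
    (∫ x in (0:ℝ)..1, F x)
      = (1/2) * (∫ u in (0:ℝ)..1, F (u/2)) + (1/2) * (∫ u in (0:ℝ)..1, F ((u+1)/2)) := by
  have h2 : (∫ u in (0:ℝ)..1, F (u/2)) = 2 * ∫ x in (0:ℝ)..(1/2:ℝ), F x := by
    rw [intervalIntegral.integral_comp_div F (two_ne_zero)]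
    norm_num [smul_eq_mul]
  have h3 : (∫ u in (0:ℝ)..1, F ((u+1)/2)) = 2 * ∫ x in (1/2:ℝ)..1, F x := by
    have harg : ∀ u : ℝ, (u+1)/2 = (1/2)*u + 1/2 := fun u => by ring
    simp_rw [harg]
    rw [intervalIntegral.integral_comp_mul_add F (by norm_num : (1/2:ℝ) ≠ 0) (1/2)]
    norm_num [smul_eq_mul]
  have i1 : IntervalIntegrable F volume 0 (1/2) :=
    (hF.mono my_sub1).intervalIntegrable
  have i2 : IntervalIntegrable F volume (1/2) 1 :=
    (hF.mono my_sub2).intervalIntegrable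
  have hadd := intervalIntegral.integral_add_adjacent_intervals i1 i2
  rw [h2, h3]
  linear_combination -hadd

lemma eval_int (f g : ℝ → ℝ) (hf : ContinuousOn f (Icc 0 1)) (hg : ContinuousOn g (Icc 0 1))
    (p q r s t A B C : ℝ) :
    (∫ u in (0:ℝ)..1,
        (p*(f u*g u) + q*(u*f u) + r*(u*g u) + s*f u + t*g u + (A*u^2 + B*u + C)))
    = p*(∫ u in (0:ℝ)..1, f u*g u) + q*(∫ u in (0:ℝ)..1, u*f u) + r*(∫ u in (0:ℝ)..1, u*g u)
      + s*(∫ u in (0:ℝ)..1, f u) + t*(∫ u in (0:ℝ)..1, g u) + (A/3 + B/2 + C) := by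
  have hfi : IntervalIntegrable f volume 0 1 := (hf.mono my_sub3).intervalIntegrable
  have hgi : IntervalIntegrable g volume 0 1 := (hg.mono my_sub3).intervalIntegrable
  have hfg : IntervalIntegrable (fun u => f u * g u) volume 0 1 :=
    ((hf.mul hg).mono my_sub3).intervalIntegrable
  have huf : IntervalIntegrable (fun u => u * f u) volume 0 1 :=
    ((continuousOn_id.mul hf).mono my_sub3).intervalIntegrable
  have hug : IntervalIntegrable (fun u => u * g u) volume 0 1 :=
    ((continuousOn_id.mul hg).mono my_sub3).intervalIntegrable
  have i1 : IntervalIntegrable (fun u => p * (f u * g u)) volume 0 1 := hfg.const_mul p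
  have i2 : IntervalIntegrable (fun u => q * (u * f u)) volume 0 1 := huf.const_mul q
  have i3 : IntervalIntegrable (fun u => r * (u * g u)) volume 0 1 := hug.const_mul r
  have i4 : IntervalIntegrable (fun u => s * f u) volume 0 1 := hfi.const_mul s
  have i5 : IntervalIntegrable (fun u => t * g u) volume 0 1 := hgi.const_mul t
  have i6 : IntervalIntegrable (fun u : ℝ => A*u^2 + B*u + C) volume 0 1 :=
    (Continuous.intervalIntegrable (by continuity) 0 1)
  rw [intervalIntegral.integral_add ((((i1.add i2).add i3).add i4).add i5) i6,
      intervalIntegral.integral_add (((i1.add i2).add i3).add i4) i5,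
      intervalIntegral.integral_add ((i1.add i2).add i3) i4,
      intervalIntegral.integral_add (i1.add i2) i3,
      intervalIntegral.integral_add i1 i2,
      intervalIntegral.integral_const_mul, intervalIntegral.integral_const_mul,
      intervalIntegral.integral_const_mul, intervalIntegral.integral_const_mul,
      intervalIntegral.integral_const_mul]
  have hpoly : (∫ u in (0:ℝ)..1, (A*u^2 + B*u + C)) = A/3 + B/2 + C := by
    have j1 : IntervalIntegrable (fun u : ℝ => A*u^2) volume 0 1 :=
      (Continuous.intervalIntegrable (by continuity) 0 1)
    have j2 : IntervalIntegrable (fun u : ℝ => B*u) volume 0 1 :=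
      (Continuous.intervalIntegrable (by continuity) 0 1)
    have j3 : IntervalIntegrable (fun u : ℝ => (C:ℝ)) volume 0 1 :=
      (Continuous.intervalIntegrable (by continuity) 0 1)
    rw [intervalIntegral.integral_add (j1.add j2) j3,
        intervalIntegral.integral_add j1 j2,
        intervalIntegral.integral_const_mul, intervalIntegral.integral_const_mul]
    simp [integral_pow, integral_id]
    ring
  rw [hpoly]

lemma momE (α₁ α₂ c₁ d₁ c₂ d₂ : ℝ) (f : ℝ → ℝ) (hf : ContinuousOn f (Icc 0 1))
    (h : ∀ u ∈ Icc (0:ℝ) 1,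
      f (u/2) = α₁ * f u + (c₁*u + d₁) ∧ f ((u+1)/2) = α₂ * f u + (c₂*u + d₂)) :
    (2 - α₁ - α₂) * (∫ u in (0:ℝ)..1, f u) = c₁/2 + d₁ + c₂/2 + d₂ ∧
    (4 - α₁ - α₂) * (∫ u in (0:ℝ)..1, u * f u)
      = α₂ * (∫ u in (0:ℝ)..1, f u) + c₁/3 + d₁/2 + 5*c₂/6 + 3*d₂/2 := by
  have hsp1 := split_int f hf
  have hsp2 := split_int (fun x => x * f x) (continuousOn_id.mul hf)
  have A1 : (∫ u in (0:ℝ)..1, f (u/2))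
      = α₁ * (∫ u in (0:ℝ)..1, f u) + (c₁/2 + d₁) := by
    have e1 : (∫ u in (0:ℝ)..1, f (u/2)) = ∫ u in (0:ℝ)..1,
        ((0:ℝ)*(f u*f u) + (0:ℝ)*(u*f u) + (0:ℝ)*(u*f u) + α₁*f u + (0:ℝ)*f u
          + ((0:ℝ)*u^2 + c₁*u + d₁)) := by
      apply intervalIntegral.integral_congr
      intro u hu
      have hu' : u ∈ Icc (0:ℝ) 1 := my_sub3 hu
      dsimp only
      rw [(h u hu').1]; ring
    rw [e1, eval_int f f hf hf]; try ring
  have A2 : (∫ u in (0:ℝ)..1, f ((u+1)/2))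
      = α₂ * (∫ u in (0:ℝ)..1, f u) + (c₂/2 + d₂) := by
    have e1 : (∫ u in (0:ℝ)..1, f ((u+1)/2)) = ∫ u in (0:ℝ)..1,
        ((0:ℝ)*(f u*f u) + (0:ℝ)*(u*f u) + (0:ℝ)*(u*f u) + α₂*f u + (0:ℝ)*f u
          + ((0:ℝ)*u^2 + c₂*u + d₂)) := by
      apply intervalIntegral.integral_congr
      intro u hu
      have hu' : u ∈ Icc (0:ℝ) 1 := my_sub3 hu
      dsimp only
      rw [(h u hu').2]; ring
    rw [e1, eval_int f f hf hf]; try ring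
  have B1 : (∫ u in (0:ℝ)..1, u/2 * f (u/2))
      = (α₁/2) * (∫ u in (0:ℝ)..1, u * f u) + (c₁/6 + d₁/4) := by
    have e1 : (∫ u in (0:ℝ)..1, u/2 * f (u/2)) = ∫ u in (0:ℝ)..1,
        ((0:ℝ)*(f u*f u) + (α₁/2)*(u*f u) + (0:ℝ)*(u*f u) + (0:ℝ)*f u + (0:ℝ)*f u
          + ((c₁/2)*u^2 + (d₁/2)*u + 0)) := by
      apply intervalIntegral.integral_congr
      intro u hu
      have hu' : u ∈ Icc (0:ℝ) 1 := my_sub3 hu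
      dsimp only
      rw [(h u hu').1]; ring
    rw [e1, eval_int f f hf hf]; try ring
  have B2 : (∫ u in (0:ℝ)..1, (u+1)/2 * f ((u+1)/2))
      = (α₂/2) * (∫ u in (0:ℝ)..1, u * f u) + (α₂/2) * (∫ u in (0:ℝ)..1, f u)
        + (c₂/6 + (c₂+d₂)/4 + d₂/2) := by
    have e1 : (∫ u in (0:ℝ)..1, (u+1)/2 * f ((u+1)/2)) = ∫ u in (0:ℝ)..1,
        ((0:ℝ)*(f u*f u) + (α₂/2)*(u*f u) + (0:ℝ)*(u*f u) + (α₂/2)*f u + (0:ℝ)*f u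
          + ((c₂/2)*u^2 + ((c₂+d₂)/2)*u + d₂/2)) := by
      apply intervalIntegral.integral_congr
      intro u hu
      have hu' : u ∈ Icc (0:ℝ) 1 := my_sub3 hu
      dsimp only
      rw [(h u hu').2]; ring
    rw [e1, eval_int f f hf hf]; try ring
  constructor
  · linear_combination 2*hsp1 + A1 + A2
  · linear_combination 4*hsp2 + 2*B1 + 2*B2

lemma prodE (α₁ α₂ c₁ d₁ c₂ d₂ C₁ D₁ C₂ D₂ : ℝ) (f g : ℝ → ℝ)
    (hf : ContinuousOn f (Icc 0 1)) (hg : ContinuousOn g (Icc 0 1))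
    (hF : ∀ u ∈ Icc (0:ℝ) 1,
      f (u/2) = α₁ * f u + (c₁*u + d₁) ∧ f ((u+1)/2) = α₂ * f u + (c₂*u + d₂))
    (hG : ∀ u ∈ Icc (0:ℝ) 1,
      g (u/2) = α₁ * g u + (C₁*u + D₁) ∧ g ((u+1)/2) = α₂ * g u + (C₂*u + D₂)) :
    (2 - α₁^2 - α₂^2) * (∫ u in (0:ℝ)..1, f u * g u)
      = α₁*(C₁*(∫ u in (0:ℝ)..1, u * f u) + D₁*(∫ u in (0:ℝ)..1, f u)
            + c₁*(∫ u in (0:ℝ)..1, u * g u) + d₁*(∫ u in (0:ℝ)..1, g u))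
        + α₂*(C₂*(∫ u in (0:ℝ)..1, u * f u) + D₂*(∫ u in (0:ℝ)..1, f u)
            + c₂*(∫ u in (0:ℝ)..1, u * g u) + d₂*(∫ u in (0:ℝ)..1, g u))
        + (c₁*C₁/3 + (c₁*D₁ + C₁*d₁)/2 + d₁*D₁)
        + (c₂*C₂/3 + (c₂*D₂ + C₂*d₂)/2 + d₂*D₂) := by
  have hsp := split_int (fun x => f x * g x) (hf.mul hg)
  have A1 : (∫ u in (0:ℝ)..1, f (u/2) * g (u/2))
      = (α₁^2)*(∫ u in (0:ℝ)..1, f u * g u) + (α₁*C₁)*(∫ u in (0:ℝ)..1, u * f u)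
        + (α₁*c₁)*(∫ u in (0:ℝ)..1, u * g u) + (α₁*D₁)*(∫ u in (0:ℝ)..1, f u)
        + (α₁*d₁)*(∫ u in (0:ℝ)..1, g u)
        + (c₁*C₁/3 + (c₁*D₁ + C₁*d₁)/2 + d₁*D₁) := by
    have e1 : (∫ u in (0:ℝ)..1, f (u/2) * g (u/2)) = ∫ u in (0:ℝ)..1,
        ((α₁^2)*(f u*g u) + (α₁*C₁)*(u*f u) + (α₁*c₁)*(u*g u) + (α₁*D₁)*f u + (α₁*d₁)*g u
          + ((c₁*C₁)*u^2 + (c₁*D₁ + C₁*d₁)*u + d₁*D₁)) := by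
      apply intervalIntegral.integral_congr
      intro u hu
      have hu' : u ∈ Icc (0:ℝ) 1 := my_sub3 hu
      dsimp only
      rw [(hF u hu').1, (hG u hu').1]; ring
    rw [e1, eval_int f g hf hg]; try ring
  have A2 : (∫ u in (0:ℝ)..1, f ((u+1)/2) * g ((u+1)/2))
      = (α₂^2)*(∫ u in (0:ℝ)..1, f u * g u) + (α₂*C₂)*(∫ u in (0:ℝ)..1, u * f u)
        + (α₂*c₂)*(∫ u in (0:ℝ)..1, u * g u) + (α₂*D₂)*(∫ u in (0:ℝ)..1, f u)
        + (α₂*d₂)*(∫ u in (0:ℝ)..1, g u)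
        + (c₂*C₂/3 + (c₂*D₂ + C₂*d₂)/2 + d₂*D₂) := by
    have e1 : (∫ u in (0:ℝ)..1, f ((u+1)/2) * g ((u+1)/2)) = ∫ u in (0:ℝ)..1,
        ((α₂^2)*(f u*g u) + (α₂*C₂)*(u*f u) + (α₂*c₂)*(u*g u) + (α₂*D₂)*f u + (α₂*d₂)*g u
          + ((c₂*C₂)*u^2 + (c₂*D₂ + C₂*d₂)*u + d₂*D₂)) := by
      apply intervalIntegral.integral_congr
      intro u hu
      have hu' : u ∈ Icc (0:ℝ) 1 := my_sub3 hu
      dsimp only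
      rw [(hF u hu').2, (hG u hu').2]; ring
    rw [e1, eval_int f g hf hg]; try ring
  linear_combination 2*hsp + A1 + A2

lemma afif_zero (γ₁ γ₂ : ℝ) (h1 : |γ₁| < 1) (h2 : |γ₂| < 1) (g : ℝ → ℝ)
    (hg : IsAFIF2 γ₁ γ₂ g 0 0 0) : ∀ u ∈ Icc (0:ℝ) 1, g u = 0 := by
  obtain ⟨hc, ⟨e₁, h₁, e₂, h₂, hrec⟩, g0, gh, g1⟩ := hg
  have m0 : (0:ℝ) ∈ Icc (0:ℝ) 1 := by norm_num
  have m1 : (1:ℝ) ∈ Icc (0:ℝ) 1 := by norm_num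
  have r0 := (hrec 0 m0).1
  have r1 := (hrec 1 m1).1
  have r2 := (hrec 0 m0).2
  have r3 := (hrec 1 m1).2
  norm_num [g0, gh, g1] at r0 r1 r2 r3
  -- r0 : 0 = γ₁ * 0 + h₁ style; derive constants vanish
  have hh₁ : h₁ = 0 := by linarith [r0]
  have he₁ : e₁ = 0 := by linarith [r1]
  have hh₂ : h₂ = 0 := by linarith [r2]
  have he₂ : e₂ = 0 := by linarith [r3]
  subst hh₁ he₁ hh₂ he₂
  obtain ⟨x, hx, hmax⟩ := isCompact_Icc.exists_isMaxOn (nonempty_Icc.mpr zero_le_one) hc.abs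
  set c : ℝ := max |γ₁| |γ₂| with hcdef
  have hc0 : 0 ≤ c := le_trans (abs_nonneg _) (le_max_left _ _)
  have hc1 : c < 1 := max_lt h1 h2
  have key : |g x| ≤ c * |g x| := by
    rcases le_or_gt x (1/2) with hhalf | hhalf
    · have h2x : (2*x) ∈ Icc (0:ℝ) 1 := ⟨by linarith [hx.1], by linarith⟩
      have heq : g x = γ₁ * g (2*x) := by
        have := (hrec (2*x) h2x).1
        rw [show (2*x)/2 = x by ring] at this
        linarith [this]
      calc |g x| = |γ₁| * |g (2*x)| := by rw [heq, abs_mul]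
        _ ≤ c * |g x| := by
            apply mul_le_mul (le_max_left _ _) (hmax h2x) (abs_nonneg _) hc0
    · have h2x : (2*x - 1) ∈ Icc (0:ℝ) 1 := ⟨by linarith, by linarith [hx.2]⟩
      have heq : g x = γ₂ * g (2*x - 1) := by
        have := (hrec (2*x-1) h2x).2
        rw [show (2*x-1+1)/2 = x by ring] at this
        linarith [this]
      calc |g x| = |γ₂| * |g (2*x - 1)| := by rw [heq, abs_mul]
        _ ≤ c * |g x| := by
            apply mul_le_mul (le_max_right _ _) (hmax h2x) (abs_nonneg _) hc0
  have hgx : |g x| ≤ 0 := by nlinarith [abs_nonneg (g x)]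
  intro u hu
  have := hmax hu
  have : |g u| ≤ 0 := le_trans this hgx
  exact abs_nonpos_iff.mp this

set_option maxHeartbeats 2000000 in
lemma ortho_core (α₁ α₂ r₁ s₁ : ℝ) (ha1 : |α₁| < 1) (ha2 : |α₂| < 1)
    (f0 f1 f2 : ℝ → ℝ)
    (hc0 : ContinuousOn f0 (Icc 0 1)) (hc1 : ContinuousOn f1 (Icc 0 1))
    (hc2 : ContinuousOn f2 (Icc 0 1))
    (h0 : ∃ c₁ d₁ c₂ d₂ : ℝ, ∀ u ∈ Icc (0:ℝ) 1,
      f0 (u/2) = α₁ * f0 u + (c₁*u + d₁) ∧ f0 ((u+1)/2) = α₂ * f0 u + (c₂*u + d₂))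
    (h1 : ∃ c₁ d₁ c₂ d₂ : ℝ, ∀ u ∈ Icc (0:ℝ) 1,
      f1 (u/2) = α₁ * f1 u + (c₁*u + d₁) ∧ f1 ((u+1)/2) = α₂ * f1 u + (c₂*u + d₂))
    (h2 : ∃ c₁ d₁ c₂ d₂ : ℝ, ∀ u ∈ Icc (0:ℝ) 1,
      f2 (u/2) = α₁ * f2 u + (c₁*u + d₁) ∧ f2 ((u+1)/2) = α₂ * f2 u + (c₂*u + d₂))
    (v00 : f0 0 = 1) (v01 : f0 (1/2) = r₁) (v02 : f0 1 = 0)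
    (v10 : f1 0 = 0) (v11 : f1 (1/2) = 1) (v12 : f1 1 = 0)
    (v20 : f2 0 = 0) (v21 : f2 (1/2) = s₁) (v22 : f2 1 = 1) :
    ((∫ u in (0:ℝ)..1, f0 u * f1 u) = 0 ∧ (∫ u in (0:ℝ)..1, f0 u * f2 u) = 0 ∧
      (∫ u in (0:ℝ)..1, f1 u * f2 u) = 0)
    ↔ (r₁ = (4 - 4 * α₁ ^ 2 - 6 * α₂ - 2 * α₁ * α₂ + 3 * α₁ ^ 2 * α₂ -
              4 * α₂ ^ 2 + 3 * α₂ ^ 3) /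
            (4 * (-4 + α₁ ^ 2 - α₁ * α₂ + α₂ ^ 2)) ∧
        s₁ = (4 - 6 * α₁ - 4 * α₁ ^ 2 + 3 * α₁ ^ 3 - 2 * α₁ * α₂ -
              4 * α₂ ^ 2 + 3 * α₁ * α₂ ^ 2) /
            (4 * (-4 + α₁ ^ 2 - α₁ * α₂ + α₂ ^ 2)) ∧
        rho α₁ α₂ = 0) := by
  -- positivity facts
  obtain ⟨hA1l, hA1r⟩ := abs_lt.mp ha1
  obtain ⟨hA2l, hA2r⟩ := abs_lt.mp ha2
  have hsq1 : α₁^2 < 1 := by nlinarith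
  have hsq2 : α₂^2 < 1 := by nlinarith
  have hs2 : (0:ℝ) < 2 - α₁ - α₂ := by linarith
  have hs4 : (0:ℝ) < 4 - α₁ - α₂ := by linarith
  have hq : (0:ℝ) < 2 - α₁^2 - α₂^2 := by linarith
  have hD : (-4 + α₁^2 - α₁*α₂ + α₂^2) < 0 := by nlinarith [sq_nonneg (α₁ - α₂)]
  have hDne : (4 * (-4 + α₁ ^ 2 - α₁ * α₂ + α₂ ^ 2)) ≠ 0 :=
    ne_of_lt (by linarith)
  have hKpos : (0:ℝ) < 3*(2 - α₁^2 - α₂^2)*(2 - α₁ - α₂)*(4 - α₁ - α₂) :=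
    mul_pos (mul_pos (mul_pos (by norm_num) hq) hs2) hs4
  have hK2pos : (0:ℝ) < 6*(2 - α₁^2 - α₂^2)*(2 - α₁ - α₂)*(4 - α₁ - α₂) :=
    mul_pos (mul_pos (mul_pos (by norm_num) hq) hs2) hs4
  have hD2pos : (0:ℝ) < (-4 + α₁^2 - α₁*α₂ + α₂^2)^2 := by nlinarith [hD]
  have hbigpos : (0:ℝ) < 8*(-4 + α₁^2 - α₁*α₂ + α₂^2)^2 := by nlinarith [hD]
  have h4q : (0:ℝ) < 4*(2 - α₁^2 - α₂^2) := by linarith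
  have hqDne : (4*(2 - α₁^2 - α₂^2))*((-4 + α₁^2 - α₁*α₂ + α₂^2)) ≠ 0 :=
    mul_ne_zero (ne_of_gt h4q) (ne_of_lt hD)
  have m0 : (0:ℝ) ∈ Icc (0:ℝ) 1 := by norm_num
  have m1 : (1:ℝ) ∈ Icc (0:ℝ) 1 := by norm_num
  -- constants of f0
  obtain ⟨c₁, d₁, c₂, d₂, hr0⟩ := h0
  have q0 := (hr0 0 m0).1
  have q1 := (hr0 1 m1).1
  have q2 := (hr0 0 m0).2
  have q3 := (hr0 1 m1).2
  norm_num [v00, v01, v02] at q0 q1 q2 q3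
  have hd₁ : d₁ = 1 - α₁ := by linarith [q0]
  have hc₁ : c₁ = r₁ - 1 + α₁ := by rw [hd₁] at q1; linarith [q1]
  have hd₂ : d₂ = r₁ - α₂ := by linarith [q2]
  have hc₂ : c₂ = α₂ - r₁ := by rw [hd₂] at q3; linarith [q3]
  rw [hc₁, hd₁, hc₂, hd₂] at hr0
  -- constants of f1
  obtain ⟨e₁, b₁, e₂, b₂, hr1⟩ := h1
  have p0 := (hr1 0 m0).1
  have p1 := (hr1 1 m1).1
  have p2 := (hr1 0 m0).2
  have p3 := (hr1 1 m1).2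
  norm_num [v10, v11, v12] at p0 p1 p2 p3
  have hb₁ : b₁ = 0 := by linarith [p0]
  have he₁ : e₁ = 1 := by rw [hb₁] at p1; linarith [p1]
  have hb₂ : b₂ = 1 := by linarith [p2]
  have he₂ : e₂ = -1 := by rw [hb₂] at p3; linarith [p3]
  rw [he₁, hb₁, he₂, hb₂] at hr1
  -- constants of f2
  obtain ⟨k₁, l₁, k₂, l₂, hr2⟩ := h2
  have w0 := (hr2 0 m0).1
  have w1 := (hr2 1 m1).1
  have w2 := (hr2 0 m0).2
  have w3 := (hr2 1 m1).2
  norm_num [v20, v21, v22] at w0 w1 w2 w3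
  have hl₁ : l₁ = 0 := by linarith [w0]
  have hk₁ : k₁ = s₁ - α₁ := by rw [hl₁] at w1; linarith [w1]
  have hl₂ : l₂ = s₁ := by linarith [w2]
  have hk₂ : k₂ = 1 - α₂ - s₁ := by rw [hl₂] at w3; linarith [w3]
  rw [hk₁, hl₁, hk₂, hl₂] at hr2
  -- moment equations
  obtain ⟨EM0, EP0⟩ := momE α₁ α₂ (r₁ - 1 + α₁) (1 - α₁) (α₂ - r₁) (r₁ - α₂) f0 hc0 hr0
  obtain ⟨EM1, EP1⟩ := momE α₁ α₂ 1 0 (-1) 1 f1 hc1 hr1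
  obtain ⟨EM2, EP2⟩ := momE α₁ α₂ (s₁ - α₁) 0 (1 - α₂ - s₁) s₁ f2 hc2 hr2
  have EI01 := prodE α₁ α₂ (r₁ - 1 + α₁) (1 - α₁) (α₂ - r₁) (r₁ - α₂) 1 0 (-1) 1
      f0 f1 hc0 hc1 hr0 hr1
  have EI02 := prodE α₁ α₂ (r₁ - 1 + α₁) (1 - α₁) (α₂ - r₁) (r₁ - α₂)
      (s₁ - α₁) 0 (1 - α₂ - s₁) s₁ f0 f2 hc0 hc2 hr0 hr2
  have EI12 := prodE α₁ α₂ 1 0 (-1) 1 (s₁ - α₁) 0 (1 - α₂ - s₁) s₁ f1 f2 hc1 hc2 hr1 hr2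
  -- key polynomial identities
  have key01 : 3*(2 - α₁^2 - α₂^2)*(2 - α₁ - α₂)*(4 - α₁ - α₂)*(∫ u in (0:ℝ)..1, f0 u * f1 u)
      = (4 - 4*α₁^2 - 6*α₂ - 2*α₁*α₂ + 3*α₁^2*α₂ - 4*α₂^2 + 3*α₂^3)
        - 4*(-4 + α₁^2 - α₁*α₂ + α₂^2)*r₁ := by
    linear_combination (3*(2-α₁-α₂)*(4-α₁-α₂))*EI01
      + (3*(2-α₁-α₂)*(α₁ - α₂))*EP0
      + (3*(2-α₁-α₂)*(α₁*(r₁-1+α₁) + α₂*(α₂-r₁)))*EP1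
      + (3*((4-α₁-α₂)*α₂ + α₂*(α₁-α₂)))*EM0
      + (3*((4-α₁-α₂)*(α₁*(1-α₁) + α₂*(r₁-α₂)) + α₂*(α₁*(r₁-1+α₁) + α₂*(α₂-r₁))))*EM1
  have key12 : 3*(2 - α₁^2 - α₂^2)*(2 - α₁ - α₂)*(4 - α₁ - α₂)*(∫ u in (0:ℝ)..1, f1 u * f2 u)
      = (4 - 6*α₁ - 4*α₁^2 + 3*α₁^3 - 2*α₁*α₂ - 4*α₂^2 + 3*α₁*α₂^2)
        - 4*(-4 + α₁^2 - α₁*α₂ + α₂^2)*s₁ := by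
    linear_combination (3*(2-α₁-α₂)*(4-α₁-α₂))*EI12
      + (3*(2-α₁-α₂)*(α₁*(s₁-α₁) + α₂*(1-α₂-s₁)))*EP1
      + (3*(2-α₁-α₂)*(α₁ - α₂))*EP2
      + (3*((4-α₁-α₂)*(α₂*s₁) + α₂*(α₁*(s₁-α₁) + α₂*(1-α₂-s₁))))*EM1
      + (3*((4-α₁-α₂)*α₂ + α₂*(α₁-α₂)))*EM2
  have key02 : 6*(2 - α₁^2 - α₂^2)*(2 - α₁ - α₂)*(4 - α₁ - α₂)*(∫ u in (0:ℝ)..1, f0 u * f2 u)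
      = (8:ℝ) * s₁ + (8:ℝ) * r₁ + (32:ℝ) * r₁ * s₁ + (-6:ℝ) * α₂ + (-12:ℝ) * α₂ * s₁
        + (4:ℝ) * α₂^2 + (-8:ℝ) * α₂^2 * s₁ + (-8:ℝ) * α₂^2 * r₁ + (-8:ℝ) * α₂^2 * r₁ * s₁
        + (3:ℝ) * α₂^3 + (6:ℝ) * α₂^3 * s₁ + (-1:ℝ) * α₂^4 + (-6:ℝ) * α₁ + (-12:ℝ) * α₁ * r₁
        + (6:ℝ) * α₁ * α₂ + (-4:ℝ) * α₁ * α₂ * s₁ + (-4:ℝ) * α₁ * α₂ * r₁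
        + (8:ℝ) * α₁ * α₂ * r₁ * s₁ + (3:ℝ) * α₁ * α₂^2 + (6:ℝ) * α₁ * α₂^2 * r₁
        + (-2:ℝ) * α₁ * α₂^3 + (4:ℝ) * α₁^2 + (-8:ℝ) * α₁^2 * s₁ + (-8:ℝ) * α₁^2 * r₁
        + (-8:ℝ) * α₁^2 * r₁ * s₁ + (3:ℝ) * α₁^2 * α₂ + (6:ℝ) * α₁^2 * α₂ * s₁
        + (-2:ℝ) * α₁^2 * α₂^2 + (3:ℝ) * α₁^3 + (6:ℝ) * α₁^3 * r₁ + (-2:ℝ) * α₁^3 * α₂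
        + (-1:ℝ) * α₁^4 := by
    linear_combination (6*(2-α₁-α₂)*(4-α₁-α₂))*EI02
      + (6*(2-α₁-α₂)*(α₁*(s₁-α₁) + α₂*(1-α₂-s₁)))*EP0
      + (6*(2-α₁-α₂)*(α₁*(r₁-1+α₁) + α₂*(α₂-r₁)))*EP2
      + (6*((4-α₁-α₂)*(α₂*s₁) + α₂*(α₁*(s₁-α₁) + α₂*(1-α₂-s₁))))*EM0
      + (6*((4-α₁-α₂)*(α₁*(1-α₁) + α₂*(r₁-α₂)) + α₂*(α₁*(r₁-1+α₁) + α₂*(α₂-r₁))))*EM2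
  constructor
  · rintro ⟨e01, e02, e12⟩
    rw [e01] at key01
    rw [e12] at key12
    rw [e02] at key02
    have hr' : (4 * (-4 + α₁ ^ 2 - α₁ * α₂ + α₂ ^ 2)) * r₁
        = 4 - 4*α₁^2 - 6*α₂ - 2*α₁*α₂ + 3*α₁^2*α₂ - 4*α₂^2 + 3*α₂^3 := by
      linear_combination key01
    have hs' : (4 * (-4 + α₁ ^ 2 - α₁ * α₂ + α₂ ^ 2)) * s₁
        = 4 - 6*α₁ - 4*α₁^2 + 3*α₁^3 - 2*α₁*α₂ - 4*α₂^2 + 3*α₁*α₂^2 := by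
      linear_combination key12
    refine ⟨?_, ?_, ?_⟩
    · rw [eq_div_iff hDne]; linear_combination hr'
    · rw [eq_div_iff hDne]; linear_combination hs'
    · -- rho vanishes
      have hρ0 : (4*(2 - α₁^2 - α₂^2))*((-4 + α₁^2 - α₁*α₂ + α₂^2)) * rho α₁ α₂ = 0 := by
        rw [rho]
        linear_combination (-8*(-4 + α₁^2 - α₁*α₂ + α₂^2)^2)*key02
          + (-((-64:ℝ) + (-256:ℝ) * s₁ + (80:ℝ) * α₂^2 + (128:ℝ) * α₂^2 * s₁
              + (-16:ℝ) * α₂^4 + (-16:ℝ) * α₂^4 * s₁ + (96:ℝ) * α₁ + (16:ℝ) * α₁ * α₂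
              + (-128:ℝ) * α₁ * α₂ * s₁ + (-72:ℝ) * α₁ * α₂^2 + (8:ℝ) * α₁ * α₂^3
              + (32:ℝ) * α₁ * α₂^3 * s₁ + (12:ℝ) * α₁ * α₂^4 + (80:ℝ) * α₁^2
              + (128:ℝ) * α₁^2 * s₁ + (24:ℝ) * α₁^2 * α₂ + (-24:ℝ) * α₁^2 * α₂^2
              + (-48:ℝ) * α₁^2 * α₂^2 * s₁ + (-12:ℝ) * α₁^2 * α₂^3 + (-72:ℝ) * α₁^3
              + (8:ℝ) * α₁^3 * α₂ + (32:ℝ) * α₁^3 * α₂ * s₁ + (24:ℝ) * α₁^3 * α₂^2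
              + (-16:ℝ) * α₁^4 + (-16:ℝ) * α₁^4 * s₁ + (-12:ℝ) * α₁^4 * α₂
              + (12:ℝ) * α₁^5))*hr'
      exact (mul_eq_zero.mp hρ0).resolve_left hqDne
  · rintro ⟨hr, hs, hρ⟩
    have hr' : (4 * (-4 + α₁ ^ 2 - α₁ * α₂ + α₂ ^ 2)) * r₁
        = 4 - 4*α₁^2 - 6*α₂ - 2*α₁*α₂ + 3*α₁^2*α₂ - 4*α₂^2 + 3*α₂^3 := by
      rw [hr, mul_div_assoc', mul_div_cancel_left₀ _ hDne]
    have hs' : (4 * (-4 + α₁ ^ 2 - α₁ * α₂ + α₂ ^ 2)) * s₁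
        = 4 - 6*α₁ - 4*α₁^2 + 3*α₁^3 - 2*α₁*α₂ - 4*α₂^2 + 3*α₁*α₂^2 := by
      rw [hs, mul_div_assoc', mul_div_cancel_left₀ _ hDne]
    have hρ' : (8:ℝ) + 12 * α₁ - 28 * α₁ ^ 2 + 6 * α₁ ^ 3 + 2 * α₁ ^ 4 + 12 * α₂
        - 14 * α₁ * α₂ + 18 * α₁ ^ 2 * α₂ - 7 * α₁ ^ 3 * α₂ - 28 * α₂ ^ 2
        + 18 * α₁ * α₂ ^ 2 + 6 * α₂ ^ 3 - 7 * α₁ * α₂ ^ 3 + 2 * α₂ ^ 4 = 0 := by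
      rw [rho] at hρ; linarith [hρ]
    refine ⟨?_, ?_, ?_⟩
    · have h01 : 3*(2 - α₁^2 - α₂^2)*(2 - α₁ - α₂)*(4 - α₁ - α₂)
          * (∫ u in (0:ℝ)..1, f0 u * f1 u) = 0 := by
        rw [key01]; linear_combination -hr'
      exact (mul_eq_zero.mp h01).resolve_left (ne_of_gt hKpos)
    · have h02 : 6*(2 - α₁^2 - α₂^2)*(2 - α₁ - α₂)*(4 - α₁ - α₂)
          * (∫ u in (0:ℝ)..1, f0 u * f2 u) = 0 := by
        have big : (8*(-4 + α₁^2 - α₁*α₂ + α₂^2)^2)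
            * (6*(2 - α₁^2 - α₂^2)*(2 - α₁ - α₂)*(4 - α₁ - α₂)
              * (∫ u in (0:ℝ)..1, f0 u * f2 u)) = 0 := by
          linear_combination (8*(-4 + α₁^2 - α₁*α₂ + α₂^2)^2)*key02
            + (((-64:ℝ) + (-256:ℝ) * s₁ + (80:ℝ) * α₂^2 + (128:ℝ) * α₂^2 * s₁
              + (-16:ℝ) * α₂^4 + (-16:ℝ) * α₂^4 * s₁ + (96:ℝ) * α₁ + (16:ℝ) * α₁ * α₂
              + (-128:ℝ) * α₁ * α₂ * s₁ + (-72:ℝ) * α₁ * α₂^2 + (8:ℝ) * α₁ * α₂^3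
              + (32:ℝ) * α₁ * α₂^3 * s₁ + (12:ℝ) * α₁ * α₂^4 + (80:ℝ) * α₁^2
              + (128:ℝ) * α₁^2 * s₁ + (24:ℝ) * α₁^2 * α₂ + (-24:ℝ) * α₁^2 * α₂^2
              + (-48:ℝ) * α₁^2 * α₂^2 * s₁ + (-12:ℝ) * α₁^2 * α₂^3 + (-72:ℝ) * α₁^3
              + (8:ℝ) * α₁^3 * α₂ + (32:ℝ) * α₁^3 * α₂ * s₁ + (24:ℝ) * α₁^3 * α₂^2
              + (-16:ℝ) * α₁^4 + (-16:ℝ) * α₁^4 * s₁ + (-12:ℝ) * α₁^4 * α₂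
              + (12:ℝ) * α₁^5))*hr'
            + (4*(2 - α₁^2 - α₂^2)*(-4 + α₁^2 - α₁*α₂ + α₂^2))*hρ'
        have hbigne : (8*(-4 + α₁^2 - α₁*α₂ + α₂^2)^2) ≠ 0 := ne_of_gt hbigpos
        exact (mul_eq_zero.mp big).resolve_left hbigne
      exact (mul_eq_zero.mp h02).resolve_left (ne_of_gt hK2pos)
    · have h12 : 3*(2 - α₁^2 - α₂^2)*(2 - α₁ - α₂)*(4 - α₁ - α₂)
          * (∫ u in (0:ℝ)..1, f1 u * f2 u) = 0 := by
        rw [key12]; linear_combination -hs'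
      exact (mul_eq_zero.mp h12).resolve_left (ne_of_gt hKpos)

end Aux

/-- The functions `f̃_{0,1}, f̃_{1,1}, f̃_{2,1}, f̃_{3,1}` are pairwise orthogonal
CHFIFs in `L²[0,1]` if and only if (a) the parameter bounds hold, (b) `r₁` and `s₁`
are given by the stated formulas and `u_{1,1}` makes `⟨f̃_{1,1}, f̃_{3,1}⟩ = 0`,
(c) `ρ(α₁, α₂) = 0`, and (d) `ζ = ⟨f̃_{0,1}, f̃_{3,1}⟩ = 0` and
`η = ⟨f̃_{2,1}, f̃_{3,1}⟩ = 0`. -/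
theorem stmt14 (α₁ α₂ β₁ β₂ γ₁ γ₂ r₁ s₁ u₁₁ : ℝ)
    (f0 f1 f2 f3 g0 g1 g2 g3 : ℝ → ℝ)
    (hg0 : IsAFIF2 γ₁ γ₂ g0 0 0 0) (hg1 : IsAFIF2 γ₁ γ₂ g1 0 0 0)
    (hg2 : IsAFIF2 γ₁ γ₂ g2 0 0 0) (hg3 : IsAFIF2 γ₁ γ₂ g3 0 1 0)
    (hf0 : IsCHFIF2 α₁ α₂ β₁ β₂ f0 g0 1 r₁ 0)
    (hf1 : IsCHFIF2 α₁ α₂ β₁ β₂ f1 g1 0 1 0)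
    (hf2 : IsCHFIF2 α₁ α₂ β₁ β₂ f2 g2 0 s₁ 1)
    (hf3 : IsCHFIF2 α₁ α₂ β₁ β₂ f3 g3 0 u₁₁ 0) :
    ((|α₁| < 1 ∧ |α₂| < 1 ∧ |γ₁| < 1 ∧ |γ₂| < 1 ∧
        |β₁| + |γ₁| < 1 ∧ |β₂| + |γ₂| < 1) ∧
      (∫ u in (0:ℝ)..1, f0 u * f1 u) = 0 ∧
      (∫ u in (0:ℝ)..1, f0 u * f2 u) = 0 ∧
      (∫ u in (0:ℝ)..1, f0 u * f3 u) = 0 ∧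
      (∫ u in (0:ℝ)..1, f1 u * f2 u) = 0 ∧
      (∫ u in (0:ℝ)..1, f1 u * f3 u) = 0 ∧
      (∫ u in (0:ℝ)..1, f2 u * f3 u) = 0)
    ↔
    ((|α₁| < 1 ∧ |α₂| < 1 ∧ |γ₁| < 1 ∧ |γ₂| < 1 ∧
        |β₁| + |γ₁| < 1 ∧ |β₂| + |γ₂| < 1) ∧
      r₁ = (4 - 4 * α₁ ^ 2 - 6 * α₂ - 2 * α₁ * α₂ + 3 * α₁ ^ 2 * α₂ -
              4 * α₂ ^ 2 + 3 * α₂ ^ 3) /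
            (4 * (-4 + α₁ ^ 2 - α₁ * α₂ + α₂ ^ 2)) ∧
      s₁ = (4 - 6 * α₁ - 4 * α₁ ^ 2 + 3 * α₁ ^ 3 - 2 * α₁ * α₂ -
              4 * α₂ ^ 2 + 3 * α₁ * α₂ ^ 2) /
            (4 * (-4 + α₁ ^ 2 - α₁ * α₂ + α₂ ^ 2)) ∧
      (∫ u in (0:ℝ)..1, f1 u * f3 u) = 0 ∧
      rho α₁ α₂ = 0 ∧
      (∫ u in (0:ℝ)..1, f0 u * f3 u) = 0 ∧
      (∫ u in (0:ℝ)..1, f2 u * f3 u) = 0) := by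
  have main : (|α₁| < 1 ∧ |α₂| < 1 ∧ |γ₁| < 1 ∧ |γ₂| < 1 ∧
        |β₁| + |γ₁| < 1 ∧ |β₂| + |γ₂| < 1) →
      (((∫ u in (0:ℝ)..1, f0 u * f1 u) = 0 ∧ (∫ u in (0:ℝ)..1, f0 u * f2 u) = 0 ∧
        (∫ u in (0:ℝ)..1, f1 u * f2 u) = 0)
      ↔ (r₁ = (4 - 4 * α₁ ^ 2 - 6 * α₂ - 2 * α₁ * α₂ + 3 * α₁ ^ 2 * α₂ -
              4 * α₂ ^ 2 + 3 * α₂ ^ 3) /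
            (4 * (-4 + α₁ ^ 2 - α₁ * α₂ + α₂ ^ 2)) ∧
        s₁ = (4 - 6 * α₁ - 4 * α₁ ^ 2 + 3 * α₁ ^ 3 - 2 * α₁ * α₂ -
              4 * α₂ ^ 2 + 3 * α₁ * α₂ ^ 2) /
            (4 * (-4 + α₁ ^ 2 - α₁ * α₂ + α₂ ^ 2)) ∧
        rho α₁ α₂ = 0)) := by
    rintro ⟨ha1, ha2, hg1lt, hg2lt, -, -⟩
    have hz0 := afif_zero γ₁ γ₂ hg1lt hg2lt g0 hg0
    have hz1 := afif_zero γ₁ γ₂ hg1lt hg2lt g1 hg1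
    have hz2 := afif_zero γ₁ γ₂ hg1lt hg2lt g2 hg2
    obtain ⟨hcf0, ⟨c₁, d₁, c₂, d₂, hrf0⟩, v00, v01, v02⟩ := hf0
    obtain ⟨hcf1, ⟨e₁, b₁, e₂, b₂, hrf1⟩, v10, v11, v12⟩ := hf1
    obtain ⟨hcf2, ⟨k₁, l₁, k₂, l₂, hrf2⟩, v20, v21, v22⟩ := hf2
    exact ortho_core α₁ α₂ r₁ s₁ ha1 ha2 f0 f1 f2 hcf0 hcf1 hcf2
      ⟨c₁, d₁, c₂, d₂, fun u hu => ⟨by rw [(hrf0 u hu).1, hz0 u hu]; ring,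
        by rw [(hrf0 u hu).2, hz0 u hu]; ring⟩⟩
      ⟨e₁, b₁, e₂, b₂, fun u hu => ⟨by rw [(hrf1 u hu).1, hz1 u hu]; ring,
        by rw [(hrf1 u hu).2, hz1 u hu]; ring⟩⟩
      ⟨k₁, l₁, k₂, l₂, fun u hu => ⟨by rw [(hrf2 u hu).1, hz2 u hu]; ring,
        by rw [(hrf2 u hu).2, hz2 u hu]; ring⟩⟩
      v00 v01 v02 v10 v11 v12 v20 v21 v22
  constructor
  · rintro ⟨hb, h01, h02, h03, h12, h13, h23⟩
    obtain ⟨hr, hs, hρ⟩ := (main hb).mp ⟨h01, h02, h12⟩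
    exact ⟨hb, hr, hs, h13, hρ, h03, h23⟩
  · rintro ⟨hb, hr, hs, h13, hρ, h03, h23⟩
    obtain ⟨h01, h02, h12⟩ := (main hb).mpr ⟨hr, hs, hρ⟩
    exact ⟨hb, h01, h02, h03, h12, h13, h23⟩
end
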